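/- arXiv:0801.1462 — 6 statements merged into one kernel-verified Lean document; each statement's English description precedes it below -/
import Mathlib

section
/- Let R be a ring and F a class of left R-modules defining a homological dimension. If F is closed under countable direct sums, then F is closed under direct summands. -/
set_option maxHeartbeats 1600000


open CategoryTheory

universe u

noncomputable section

variable {R : Type u} [Ring R]

/-- Membership in `F ∪ {0}`. -/
def MemF0 (F : ModuleCat.{u} R → Prop) (M : ModuleCat.{u} R) : Prop :=
  F M ∨ Subsingleton M

/-- There is a short exact sequence `0 → A → B → C → 0`. -/
def IsSES {R : Type u} [Ring R] (A B C : ModuleCat.{u} R) : Prop :=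
  ∃ (f : A ⟶ B) (g : B ⟶ C),
    Function.Injective f ∧ Function.Surjective g ∧ Function.Exact f g

/-- `FDimLE F n M` : `M` has left `F`-dimension `≤ n`, i.e. there is an exact sequence
`0 → F_n → ⋯ → F_0 → M → 0` with all `F_j ∈ F ∪ {0}`. -/
def FDimLE (F : ModuleCat.{u} R → Prop) : ℕ → ModuleCat.{u} R → Prop
  | 0, M => MemF0 F M
  | n + 1, M => ∃ K F0 : ModuleCat.{u} R, MemF0 F F0 ∧ IsSES K F0 M ∧ FDimLE F n K

/-- `M` admits a (possibly infinite) `F`-resolution `⋯ → F_1 → F_0 → M → 0`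
with all terms in `F ∪ {0}`. -/
def HasFRes (F : ModuleCat.{u} R → Prop) (M : ModuleCat.{u} R) : Prop :=
  ∃ K Fo : ℕ → ModuleCat.{u} R, K 0 = M ∧
    ∀ n, MemF0 F (Fo n) ∧ IsSES (K (n + 1)) (Fo n) (K n)

/-- `IsFKernel F n K X` : there is an exact sequence
`0 → K → F_n → ⋯ → F_0 → X → 0` with all `F_i ∈ F`. -/
def IsFKernel (F : ModuleCat.{u} R → Prop) : ℕ → ModuleCat.{u} R → ModuleCat.{u} R → Prop
  | 0, K, X => ∃ F0, F F0 ∧ IsSES K F0 X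
  | n + 1, K, X => ∃ K1 F0, F F0 ∧ IsSES K1 F0 X ∧ IsFKernel F n K K1

/-- The class `F` defines a homological dimension. -/
def DefinesHomDim (F : ModuleCat.{u} R → Prop) : Prop :=
  (∀ K Fm M : ModuleCat.{u} R, F Fm → IsSES K Fm M → HasFRes F M → HasFRes F K) ∧
  (∀ (n : ℕ) (K X : ModuleCat.{u} R), FDimLE F (n + 1) X → IsFKernel F n K X → F K)

/-- `M` is a homomorphic image of a module in `F`. -/
def IsImageOfF (F : ModuleCat.{u} R → Prop) (M : ModuleCat.{u} R) : Prop :=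
  ∃ F0 : ModuleCat.{u} R, F F0 ∧ ∃ g : F0 ⟶ M, Function.Surjective g

/-- `F` is closed under finite (binary) direct sums. -/
def ClosedUnderFinSums (F : ModuleCat.{u} R → Prop) : Prop :=
  ∀ A B : ModuleCat.{u} R, F A → F B → F (ModuleCat.of R (A × B))

/-- The class of homomorphic images of modules in `F` is closed under extensions. -/
def ImagesClosedUnderExt (F : ModuleCat.{u} R → Prop) : Prop :=
  ∀ (A B C : ModuleCat.{u} R) (f : A ⟶ B) (g : B ⟶ C),
    Function.Injective f → Function.Surjective g → Function.Exact f g →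
      IsImageOfF F A → IsImageOfF F C → IsImageOfF F B

/-- `Ext^i(M, N)` vanishes. -/
def ExtZero {R : Type u} [Ring R] (i : ℕ) (M N : ModuleCat.{u} R) : Prop :=
  Subsingleton (((Ext ℤ (ModuleCat.{u} R) i).obj (Opposite.op M)).obj N)

end
open DirectSum in
theorem stmt3 {R : Type u} [Ring R] (F : ModuleCat.{u} R → Prop)
    (hF : DefinesHomDim F)
    (hsum : ∀ M : ℕ → ModuleCat.{u} R, (∀ n, F (M n)) →
      F (ModuleCat.of R (⨁ n, M n))) :
    ∀ M N : ModuleCat.{u} R,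
      (∃ (i : N ⟶ M) (p : M ⟶ N), i ≫ p = 𝟙 N) → F M → F N := by
  rintro M N ⟨i, p, hip⟩ hM
  have hpi : ∀ x : N, p (i x) = x := fun x => congrArg (fun f : N ⟶ N => f x) hip
  let e : M →ₗ[R] M := LinearMap.comp i.hom p.hom
  let q : M →ₗ[R] M := LinearMap.id - e
  have hqdef : ∀ m : M, q m = m - i (p m) := fun m => rfl
  have hpq : ∀ m : M, p (q m) = 0 := by intro m; simp [hqdef, hpi]
  have hpe : ∀ m : M, p (e m) = p m := by intro m; simp [e, hpi]
  have hqe : ∀ m : M, q (e m) = 0 := by intro m; simp [hqdef, e, hpi]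
  have heq : ∀ m : M, e (q m) = 0 := by intro m; simp [e, hpq, LinearMap.comp_apply]
  have hqq : ∀ m : M, q (q m) = q m := by intro m; rw [hqdef (q m), hpq]; simp
  have hee : ∀ m : M, e (e m) = e m := by intro m; simp [e, hpi]
  have hqi : ∀ x : N, q (i x) = 0 := by intro x; simp [hqdef, hpi]
  have hqe' : ∀ m : M, q m + e m = m := by intro m; simp [hqdef, e]
  let Mf : ℕ → Type u := fun _ => M
  let T : Type u := ⨁ n, Mf n
  let S : ModuleCat.{u} R := ModuleCat.of R T
  have hS : F S := hsum (fun _ => M) (fun _ => hM)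
  let L : (n : ℕ) → (M : Type u) →ₗ[R] T := fun n => DirectSum.lof R ℕ Mf n
  have hLapp : ∀ (j n : ℕ) (m : M), (L j m) n = if j = n then m else 0 := by
    intro j n m
    by_cases hjn : j = n
    · subst hjn
      show ((DirectSum.lof R ℕ Mf j) m) j = if j = j then m else 0
      rw [DirectSum.lof_eq_of, DirectSum.of_eq_same, if_pos rfl]
    · show ((DirectSum.lof R ℕ Mf j) m) n = if j = n then m else 0
      rw [DirectSum.lof_eq_of, DirectSum.of_eq_of_ne _ _ _ (Ne.symm hjn), if_neg hjn]
  let c : ℕ → ((M : Type u) →ₗ[R] T) := fun n =>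
    Nat.rec ((L 0).comp q) (fun k _ => (L (k+1)).comp q + (L k).comp e) n
  have hc0 : c 0 = (L 0).comp q := rfl
  have hcs : ∀ k, c (k+1) = (L (k+1)).comp q + (L k).comp e := fun _ => rfl
  let g : T →ₗ[R] T := DirectSum.toModule R ℕ T c
  let Hm : T →ₗ[R] T := DirectSum.toModule R ℕ T
    (fun n => (L n).comp q + (L (n+1)).comp e)
  let f : (N : Type u) →ₗ[R] T := (L 0).comp i.hom
  -- surjectivity of g
  have hgH : ∀ x : T, g (Hm x) = x := by
    have : g.comp Hm = LinearMap.id := by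
      apply DirectSum.linearMap_ext
      intro j
      refine LinearMap.ext fun m => ?_
      show g (Hm (L j m)) = L j m
      have h1 : Hm (L j m) = L j (q m) + L (j+1) (e m) :=
        DirectSum.toModule_lof (φ := fun n => (L n).comp q + (L (n+1)).comp e) R j m
      rw [h1, map_add]
      have h2 : g (L j (q m)) = c j (q m) := DirectSum.toModule_lof (φ := c) R j (q m)
      have h3 : g (L (j+1) (e m)) = c (j+1) (e m) := DirectSum.toModule_lof (φ := c) R (j+1) (e m)
      rw [h2, h3, hcs j]
      cases j with
      | zero =>
        rw [hc0]
        simp only [LinearMap.add_apply, LinearMap.comp_apply]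
        rw [hqq, hqe, hee, map_zero, zero_add, ← map_add, hqe']
      | succ k =>
        rw [hcs k]
        simp only [LinearMap.add_apply, LinearMap.comp_apply]
        rw [hqq, hqe, heq, hee, map_zero, map_zero, add_zero, zero_add, ← map_add, hqe']
    intro x; exact congrArg (fun φ : T →ₗ[R] T => φ x) this
  have hgsurj : Function.Surjective g := fun y => ⟨Hm y, hgH y⟩
  -- component formula for g
  have hcompf : ∀ (x : T) (n : ℕ), g x n = q (x n) + e (x (n+1)) := by
    intro x n
    have : (DFinsupp.lapply n).comp g =
        q.comp (DFinsupp.lapply n) + e.comp (DFinsupp.lapply (n+1)) := by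
      apply DirectSum.linearMap_ext
      intro j
      ext m
      show g (L j m) n = q ((L j m) n) + e ((L j m) (n+1))
      have h2 : g (L j m) = c j m := DirectSum.toModule_lof (φ := c) R j m
      rw [h2, hLapp, hLapp]
      cases j with
      | zero =>
        rw [hc0]
        show (L 0 (q m)) n = _
        rw [hLapp]
        by_cases h0 : (0 : ℕ) = n
        · subst h0; simp
        · have h1 : (0 : ℕ) ≠ n + 1 := by omega
          simp [h0, h1]
      | succ k =>
        rw [hcs k]
        show (L (k+1) (q m)) n + (L k (e m)) n = _
        rw [hLapp, hLapp]
        by_cases h0 : k + 1 = n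
        · subst h0
          have h1 : k ≠ k + 1 := by omega
          by_cases h2 : k + 1 = k + 1 + 1
          · omega
          · simp [h1, h2]
        · by_cases h2 : k = n
          · subst h2
            have h3 : k + 1 = k + 1 := rfl
            simp [h0]
          · have h3 : k + 1 ≠ n + 1 := by omega
            simp [h0, h2, h3]
    exact congrArg (fun φ : T →ₗ[R] (Mf n) => φ x) this
  -- injectivity of f
  have hfinj : Function.Injective f := by
    intro a b hab
    have : (f a) 0 = (f b) 0 := by rw [hab]
    have h1 : ∀ x : N, (f x) 0 = i x := by
      intro x; show (L 0 (i x)) 0 = i x; rw [hLapp]; simp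
    rw [h1, h1] at this
    calc a = p (i a) := (hpi a).symm
    _ = p (i b) := by rw [this]
    _ = b := hpi b
  -- exactness
  have hexact : Function.Exact f g := by
    intro x
    constructor
    · intro hx
      have hcomp0 : ∀ n, q (x n) + e (x (n+1)) = 0 := by
        intro n; rw [← hcompf x n, hx]; rfl
      have hp0 : ∀ n, p (x (n+1)) = 0 := by
        intro n
        have := congrArg p (hcomp0 n)
        rw [map_add, hpq, hpe, zero_add, map_zero] at this
        exact this
      have he0 : ∀ n, e (x (n+1)) = 0 := by
        intro n; show i (p (x (n+1))) = 0; rw [hp0, map_zero]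
      have hq0 : ∀ n, q (x n) = 0 := by
        intro n; have := hcomp0 n; rw [he0, add_zero] at this; exact this
      have hxsucc : ∀ n, x (n+1) = 0 := by
        intro n
        have := hqe' (x (n+1))
        rw [hq0, he0, add_zero] at this
        exact this.symm
      refine ⟨p (x 0), DFinsupp.ext fun n => ?_⟩
      show (L 0 (i (p (x 0)))) n = x n
      rw [hLapp]
      cases n with
      | zero =>
        have := hqe' (x 0)
        rw [hq0, zero_add] at this
        rw [if_pos rfl]; exact this
      | succ k => simp [hxsucc k]
    · rintro ⟨y, rfl⟩
      show g (L 0 (i y)) = 0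
      rw [DirectSum.toModule_lof (φ := c), hc0]
      show L 0 (q (i y)) = 0
      rw [hqi, map_zero]
  -- assemble
  let K0 : ModuleCat.{u} R := ModuleCat.of R PUnit.{u+1}
  have hK0sub : Subsingleton K0 := by
    show Subsingleton PUnit.{u+1}; infer_instance
  have hses0 : IsSES K0 S S := by
    refine ⟨(0 : K0 ⟶ S), 𝟙 S, ?_, ?_, ?_⟩
    · intro a b _; exact Subsingleton.elim a b
    · exact fun y => ⟨y, rfl⟩
    · rw [LinearMap.exact_iff]
      simp only [ModuleCat.hom_zero, ModuleCat.hom_id, LinearMap.range_zero]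
      exact LinearMap.ker_id
  have hdim : FDimLE F (0 + 1) S := ⟨K0, S, Or.inl hS, hses0, Or.inr hK0sub⟩
  have hses : IsSES N S S := ⟨(ModuleCat.ofHom f : N ⟶ S), (ModuleCat.ofHom g : S ⟶ S), hfinj, hgsurj, hexact⟩
  have hker : IsFKernel F 0 N S := ⟨S, hS, hses⟩
  exact hF.2 0 N S hdim hker
end

section
/- Let R be a ring, F a class of left R-modules defining a homological dimension and closed under finite direct sums. For a short exact sequence 0 → A → B → C → 0 of left R-modules: if B and C have F-dimension ≤ i, then A has F-dimension ≤ i. -/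
open CategoryTheory

universe u

noncomputable section

variable {R : Type u} [Ring R]

variable {F : ModuleCat.{u} R → Prop}

-- AUX

lemma aux_subsingleton_of_surj {M N : ModuleCat.{u} R} (f : M ⟶ N)
    (hf : Function.Surjective f) (h : Subsingleton M) : Subsingleton N := by
  constructor
  intro a b
  obtain ⟨x, rfl⟩ := hf a
  obtain ⟨y, rfl⟩ := hf b
  rw [Subsingleton.elim x y]

lemma aux_subsingleton_of_inj {M N : ModuleCat.{u} R} (f : M ⟶ N)
    (hf : Function.Injective f) (h : Subsingleton N) : Subsingleton M := by
  constructor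
  intro a b
  exact hf (Subsingleton.elim _ _)

lemma aux_isSES_self (M : ModuleCat.{u} R) (h : Subsingleton M) : IsSES M M M := by
  refine ⟨𝟙 M, 𝟙 M, fun a b _ => Subsingleton.elim a b, fun y => ⟨y, rfl⟩, ?_⟩
  intro y
  constructor
  · intro _; exact ⟨y, rfl⟩
  · intro _; exact Subsingleton.elim _ _

instance : Subsingleton (ModuleCat.of R PUnit.{u+1}) := inferInstanceAs (Subsingleton PUnit)

lemma aux_isSES_punit (M : ModuleCat.{u} R) : IsSES (ModuleCat.of R PUnit.{u+1}) M M := by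
  refine ⟨0, 𝟙 M, fun a b _ => Subsingleton.elim a b, fun y => ⟨y, rfl⟩, ?_⟩
  intro y
  constructor
  · intro hy
    exact ⟨0, by simpa using hy.symm⟩
  · rintro ⟨x, rfl⟩
    exact rfl

variable {F : ModuleCat.{u} R → Prop}

lemma aux_fdimLE_of_subsingleton (n : ℕ) (M : ModuleCat.{u} R) (h : Subsingleton M) :
    FDimLE F n M := by
  induction n with
  | zero => exact Or.inr h
  | succ n ih => exact ⟨M, M, Or.inr h, aux_isSES_self M h, ih⟩

lemma aux_fdimLE_succ {n : ℕ} {M : ModuleCat.{u} R} (h : FDimLE F n M) :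
    FDimLE F (n + 1) M := by
  induction n generalizing M with
  | zero =>
    rcases h with h | h
    · exact ⟨ModuleCat.of R PUnit.{u+1}, M, Or.inl h, aux_isSES_punit M,
        Or.inr inferInstance⟩
    · exact aux_fdimLE_of_subsingleton _ _ h
  | succ n ih =>
    obtain ⟨K, F0, h1, h2, h3⟩ := h
    exact ⟨K, F0, h1, h2, ih h3⟩

lemma aux_hasFRes_step {M : ModuleCat.{u} R} (h : HasFRes F M) :
    ∃ G M1 : ModuleCat.{u} R, MemF0 F G ∧ IsSES M1 G M ∧ HasFRes F M1 := by
  obtain ⟨K, Fo, h0, h⟩ := h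
  exact ⟨Fo 0, K 1, (h 0).1, h0 ▸ (h 0).2,
    fun n => K (n + 1), fun n => Fo (n + 1), rfl, fun n => h (n + 1)⟩

lemma aux_hasFRes_of_fdimLE {n : ℕ} {M : ModuleCat.{u} R} (h : FDimLE F n M) :
    HasFRes F M := by
  induction n generalizing M with
  | zero =>
    rcases h with h | h
    · refine ⟨fun k => Nat.rec M (fun _ _ => ModuleCat.of R PUnit.{u+1}) k,
        fun k => Nat.rec M (fun _ _ => ModuleCat.of R PUnit.{u+1}) k, rfl, ?_⟩
      intro n
      cases n with
      | zero => exact ⟨Or.inl h, aux_isSES_punit M⟩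
      | succ n => exact ⟨Or.inr inferInstance, aux_isSES_self _ inferInstance⟩
    · exact ⟨fun _ => M, fun _ => M, rfl, fun n => ⟨Or.inr h, aux_isSES_self M h⟩⟩
  | succ n ih =>
    obtain ⟨K0, F0, h1, h2, h3⟩ := h
    obtain ⟨K', Fo', e, h'⟩ := ih h3
    refine ⟨fun k => Nat.rec M (fun j _ => K' j) k,
      fun k => Nat.rec F0 (fun j _ => Fo' j) k, rfl, ?_⟩
    intro n
    cases n with
    | zero =>
      refine ⟨h1, ?_⟩
      show IsSES (K' 0) F0 M
      rw [e]
      exact h2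
    | succ n => exact h' n

lemma aux_hasFRes_of_subsingleton (M : ModuleCat.{u} R) (h : Subsingleton M) :
    HasFRes F M :=
  aux_hasFRes_of_fdimLE (aux_fdimLE_of_subsingleton 0 M h)

lemma aux_isFKernel_extend : ∀ {j : ℕ} {X M M1 G : ModuleCat.{u} R},
    IsFKernel F j M X → F G → IsSES M1 G M → IsFKernel F (j + 1) M1 X := by
  intro j
  induction j with
  | zero =>
    rintro X M M1 G ⟨F0, hF0, ses⟩ hG ses1
    exact ⟨M, F0, hF0, ses, G, hG, ses1⟩
  | succ j ih =>
    rintro X M M1 G ⟨K1, F0, hF0, ses, hk⟩ hG ses1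
    exact ⟨K1, F0, hF0, ses, ih hk hG ses1⟩

lemma aux_fdim_cut (hF : DefinesHomDim F) :
    ∀ (n j : ℕ) (X M : ModuleCat.{u} R), FDimLE F (j + n + 1) X → IsFKernel F j M X →
      HasFRes F M → FDimLE F n M := by
  intro n
  induction n with
  | zero =>
    intro j X M hX hK _
    exact Or.inl (hF.2 j M X hX hK)
  | succ n ih =>
    intro j X M hX hK hres
    obtain ⟨G, M1, hG, ses1, hres1⟩ := aux_hasFRes_step hres
    rcases hG with hGF | hGs
    · have hX' : FDimLE F ((j + 1) + n + 1) X := by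
        have e : j + (n + 1) + 1 = (j + 1) + n + 1 := by omega
        rw [e] at hX
        exact hX
      exact ⟨M1, G, Or.inl hGF, ses1,
        ih (j + 1) X M1 hX' (aux_isFKernel_extend hK hGF ses1) hres1⟩
    · obtain ⟨_, gM, _, hsurjM, _⟩ := ses1
      exact aux_fdimLE_of_subsingleton _ _ (aux_subsingleton_of_surj gM hsurjM hGs)


lemma aux_exact_subtype {A B : Type u} [AddCommGroup A] [AddCommGroup B]
    [Module R A] [Module R B] (f : A →ₗ[R] B) :
    Function.Exact (LinearMap.ker f).subtype f := by
  intro y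
  constructor
  · intro hy
    exact ⟨⟨y, LinearMap.mem_ker.mpr hy⟩, rfl⟩
  · rintro ⟨⟨x, hx⟩, rfl⟩
    exact LinearMap.mem_ker.mp hx

def KGoodP (F : ModuleCat.{u} R → Prop) (M : ModuleCat.{u} R) : Prop :=
  ∃ Y X : ModuleCat.{u} R, IsSES M Y X ∧ HasFRes F Y ∧ HasFRes F X

lemma aux_kgood_of_subsingleton (M : ModuleCat.{u} R) (h : Subsingleton M) :
    KGoodP F M :=
  ⟨M, M, aux_isSES_self M h, aux_hasFRes_of_subsingleton M h,
    aux_hasFRes_of_subsingleton M h⟩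

set_option maxHeartbeats 2000000 in
lemma aux_kgood_step (hF : DefinesHomDim F) (hsum : ClosedUnderFinSums F)
    {M : ModuleCat.{u} R} (h : KGoodP F M) :
    ∃ G N : ModuleCat.{u} R, MemF0 F G ∧ IsSES N G M ∧ KGoodP F N := by
  obtain ⟨Y, X, ⟨ι, q, hι, hq, hexact⟩, hY, hX⟩ := h
  obtain ⟨G0, Y1, hG0, ⟨ι1, p0, hι1, hp0, hex1⟩, hY1⟩ := aux_hasFRes_step hY
  rcases hG0 with hG0F | hG0s
  swap
  · have hMs : Subsingleton M :=
      aux_subsingleton_of_inj ι hι (aux_subsingleton_of_surj p0 hp0 hG0s)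
    exact ⟨M, M, Or.inr hMs, aux_isSES_self M hMs, aux_kgood_of_subsingleton M hMs⟩
  -- main case : `G0 ∈ F`
  let p0l : G0 →ₗ[R] Y := p0.hom
  let ql : Y →ₗ[R] X := q.hom
  let ιl : M →ₗ[R] Y := ι.hom
  let qp : G0 →ₗ[R] X := ql.comp p0l
  have hqp : Function.Surjective qp := fun x => by
    obtain ⟨y, hy⟩ := hq x
    obtain ⟨v, hv⟩ := hp0 y
    exact ⟨v, by show q (p0 v) = x; rw [hv, hy]⟩
  let Mt : ModuleCat.{u} R := ModuleCat.of R (LinearMap.ker qp)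
  have sesMt : IsSES Mt G0 X :=
    ⟨ModuleCat.ofHom (LinearMap.ker qp).subtype, ModuleCat.ofHom qp, Subtype.val_injective, hqp,
      by exact aux_exact_subtype qp⟩
  have hMtres : HasFRes F Mt := hF.1 Mt G0 X hG0F sesMt hX
  obtain ⟨Gt, Kt1, hGt, ⟨ιt, rt, hιt, hrt, hext⟩, hKt1⟩ := aux_hasFRes_step hMtres
  rcases hGt with hGtF | hGts
  swap
  · have hMts : Subsingleton Mt := aux_subsingleton_of_surj rt hrt hGts
    have hza : ∀ a : M, ι a = 0 := by
      intro a
      obtain ⟨v, hv⟩ := hp0 (ι a)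
      have hv0 : v ∈ LinearMap.ker qp := by
        rw [LinearMap.mem_ker]
        show q (p0 v) = 0
        rw [hv]
        exact hexact.apply_apply_eq_zero a
      have h0 : (⟨v, hv0⟩ : LinearMap.ker qp) = 0 := @Subsingleton.elim _ hMts _ _
      have hv0' : v = 0 := congrArg Subtype.val h0
      rw [← hv, hv0', map_zero]
    have hMs : Subsingleton M := ⟨fun a b => hι (by rw [hza a, hza b])⟩
    exact ⟨M, M, Or.inr hMs, aux_isSES_self M hMs, aux_kgood_of_subsingleton M hMs⟩
  -- main case : `Gt ∈ F`
  let rtl : Gt →ₗ[R] LinearMap.ker qp := rt.hom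
  let ν : Gt →ₗ[R] Y := p0l.comp ((LinearMap.ker qp).subtype.comp rtl)
  have hν0 : ∀ u, q (ν u) = 0 := fun u => LinearMap.mem_ker.mp (rtl u).2
  have hrange : ∀ m : Y, q m = 0 → ∃ u, ν u = m := by
    intro m hm
    obtain ⟨v, hv⟩ := hp0 m
    have hv0 : v ∈ LinearMap.ker qp := by
      rw [LinearMap.mem_ker]
      show q (p0 v) = 0
      rw [hv]
      exact hm
    obtain ⟨u, hu⟩ := hrt ⟨v, hv0⟩
    refine ⟨u, ?_⟩
    show p0 ((rtl u : LinearMap.ker qp) : G0) = m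
    have : rtl u = ⟨v, hv0⟩ := hu
    rw [this]
    exact hv
  let Θ : (Gt × G0 : Type u) →ₗ[R] Y := LinearMap.coprod ν p0l
  have hΘsurj : Function.Surjective Θ := fun m => by
    obtain ⟨v, hv⟩ := hp0 m
    refine ⟨(0, v), ?_⟩
    show ν 0 + p0 v = m
    rw [map_zero, zero_add, hv]
  let S : ModuleCat.{u} R := ModuleCat.of R (Gt × G0)
  let V : ModuleCat.{u} R := ModuleCat.of R (LinearMap.ker Θ)
  have sesV : IsSES V S Y :=
    ⟨ModuleCat.ofHom (LinearMap.ker Θ).subtype, ModuleCat.ofHom Θ, Subtype.val_injective, hΘsurj,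
      by exact aux_exact_subtype Θ⟩
  have hVres : HasFRes F V := hF.1 V S Y (hsum Gt G0 hGtF hG0F) sesV hY
  let N : ModuleCat.{u} R := ModuleCat.of R (LinearMap.ker ν)
  -- the map `α : N → V`
  have hαmem : ∀ x : LinearMap.ker ν,
      ((x : Gt), (0 : G0)) ∈ LinearMap.ker Θ := by
    intro x
    rw [LinearMap.mem_ker]
    show ν (x : Gt) + p0 0 = 0
    rw [LinearMap.mem_ker.mp x.2, map_zero, add_zero]
  let α : N →ₗ[R] V :=
    LinearMap.codRestrict (LinearMap.ker Θ)
      (LinearMap.prod (LinearMap.ker ν).subtype 0) hαmem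
  have hαinj : Function.Injective α := fun a b hab =>
    Subtype.ext (congrArg Prod.fst (congrArg Subtype.val hab))
  -- the map `ψ : V → Mt`
  have hψmem : ∀ x : LinearMap.ker Θ, (x : Gt × G0).2 ∈ LinearMap.ker qp := by
    intro x
    rw [LinearMap.mem_ker]
    show q (p0 (x : Gt × G0).2) = 0
    have hx : ν (x : Gt × G0).1 + p0 (x : Gt × G0).2 = 0 := LinearMap.mem_ker.mp x.2
    have : p0l (x : Gt × G0).2 = -ν (x : Gt × G0).1 := by
      rw [eq_neg_iff_add_eq_zero, add_comm]
      exact hx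
    show ql (p0l (x : Gt × G0).2) = 0
    rw [this, map_neg, hν0, neg_zero]
  let ψ : V →ₗ[R] Mt :=
    LinearMap.codRestrict (LinearMap.ker qp)
      ((LinearMap.snd R Gt G0).comp (LinearMap.ker Θ).subtype) hψmem
  have hψsurj : Function.Surjective ψ := by
    rintro ⟨m, hm⟩
    have hqm : q (p0 m) = 0 := LinearMap.mem_ker.mp hm
    obtain ⟨u, hu⟩ := hrange (p0 m) hqm
    have hmem : ((-u, m) : Gt × G0) ∈ LinearMap.ker Θ := by
      rw [LinearMap.mem_ker]
      show ν (-u) + p0 m = 0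
      rw [map_neg, hu, neg_add_cancel]
    exact ⟨⟨(-u, m), hmem⟩, Subtype.ext rfl⟩
  have hexαψ : Function.Exact α ψ := by
    rintro ⟨⟨u, v⟩, hx⟩
    constructor
    · intro h0
      have hv : v = 0 := congrArg Subtype.val h0
      have hu : ν u = 0 := by
        have hx' : ν u + p0 v = 0 := LinearMap.mem_ker.mp hx
        rw [hv, map_zero, add_zero] at hx'
        exact hx'
      refine ⟨⟨u, LinearMap.mem_ker.mpr hu⟩, ?_⟩
      exact Subtype.ext (Prod.ext rfl hv.symm)
    · rintro ⟨t, ht⟩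
      rw [← ht]
      exact Subtype.ext rfl
  have sesN : IsSES N V Mt := ⟨ModuleCat.ofHom α, ModuleCat.ofHom ψ, hαinj, hψsurj, hexαψ⟩
  have kgoodN : KGoodP F N := ⟨V, Mt, sesN, hVres, hMtres⟩
  -- the cover `cM : Gt → M`
  have hνmem : ∀ u, ν u ∈ LinearMap.range ιl := by
    intro u
    rw [LinearMap.mem_range]
    exact (hexact (ν u)).mp (hν0 u)
  let e : M ≃ₗ[R] LinearMap.range ιl := LinearEquiv.ofInjective ιl hι
  let cM : Gt →ₗ[R] M :=
    e.symm.toLinearMap.comp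
      (LinearMap.codRestrict (LinearMap.range ιl) ν hνmem)
  have hcM : ∀ u, ι (cM u) = ν u := by
    intro u
    show ιl (e.symm ⟨ν u, hνmem u⟩) = ν u
    exact LinearEquiv.ofInjective_symm_apply (f := ιl) (h := hι) ⟨ν u, hνmem u⟩
  have hcMsurj : Function.Surjective cM := by
    intro m
    obtain ⟨u, hu⟩ := hrange (ι m) (hexact.apply_apply_eq_zero m)
    exact ⟨u, hι (by rw [hcM u, hu])⟩
  have hexNM : Function.Exact ((LinearMap.ker ν).subtype) cM := by
    intro u
    constructor
    · intro hu
      have hu' : ν u = 0 := by rw [← hcM u, hu, map_zero]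
      exact ⟨⟨u, LinearMap.mem_ker.mpr hu'⟩, rfl⟩
    · rintro ⟨⟨x, hx⟩, rfl⟩
      apply hι
      rw [hcM, map_zero]
      exact LinearMap.mem_ker.mp hx
  have sesNM : IsSES N Gt M :=
    ⟨ModuleCat.ofHom (LinearMap.ker ν).subtype, ModuleCat.ofHom cM, Subtype.val_injective, hcMsurj, hexNM⟩
  exact ⟨Gt, N, Or.inl hGtF, sesNM, kgoodN⟩


lemma aux_kgood_hasFRes (hF : DefinesHomDim F) (hsum : ClosedUnderFinSums F)
    {M : ModuleCat.{u} R} (h : KGoodP F M) : HasFRes F M := by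
  classical
  let step : (Σ' N : ModuleCat.{u} R, KGoodP F N) → Σ' N : ModuleCat.{u} R, KGoodP F N :=
    fun p => ⟨(aux_kgood_step hF hsum p.2).choose_spec.choose,
      (aux_kgood_step hF hsum p.2).choose_spec.choose_spec.2.2⟩
  let T : ℕ → Σ' N : ModuleCat.{u} R, KGoodP F N :=
    fun n => Nat.rec ⟨M, h⟩ (fun _ p => step p) n
  refine ⟨fun n => (T n).1, fun n => (aux_kgood_step hF hsum (T n).2).choose, rfl,
    fun n => ?_⟩
  have hs := (aux_kgood_step hF hsum (T n).2).choose_spec.choose_spec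
  exact ⟨hs.1, hs.2.1⟩

lemma aux_hasFRes_kernel (hF : DefinesHomDim F) (hsum : ClosedUnderFinSums F)
    {A Y X : ModuleCat.{u} R} (ses : IsSES A Y X) (hY : HasFRes F Y)
    (hX : HasFRes F X) : HasFRes F A :=
  aux_kgood_hasFRes hF hsum ⟨Y, X, ses, hY, hX⟩

lemma aux_main (hF : DefinesHomDim F) (hsum : ClosedUnderFinSums F) :
    ∀ (i : ℕ) (A B C : ModuleCat.{u} R) (f : A ⟶ B) (g : B ⟶ C),
      Function.Injective f → Function.Surjective g → Function.Exact f g →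
      FDimLE F i B → FDimLE F i C → FDimLE F i A := by
  intro i
  induction i with
  | zero =>
    intro A B C f g hinj hsurj hex hB hC
    rcases hB with hFB | hs
    · exact Or.inl (hF.2 0 A C (aux_fdimLE_succ hC) ⟨B, hFB, f, g, hinj, hsurj, hex⟩)
    · exact Or.inr (aux_subsingleton_of_inj f hinj hs)
  | succ n ih =>
    intro A B C f g hinj hsurj hex hB hC
    obtain ⟨KB, F0B, hF0B, ⟨ιB, pB, hιB, hpB, hexB⟩, hKB⟩ := hB
    rcases hF0B with hF0BF | hF0Bs
    swap
    · exact aux_fdimLE_of_subsingleton _ _ (aux_subsingleton_of_inj f hinj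
        (aux_subsingleton_of_surj pB hpB hF0Bs))
    have hB' : FDimLE F (n + 1) B :=
      ⟨KB, F0B, Or.inl hF0BF, ⟨ιB, pB, hιB, hpB, hexB⟩, hKB⟩
    have hResB : HasFRes F B := aux_hasFRes_of_fdimLE hB'
    have hResC : HasFRes F C := aux_hasFRes_of_fdimLE hC
    have hResA : HasFRes F A :=
      aux_hasFRes_kernel hF hsum ⟨f, g, hinj, hsurj, hex⟩ hResB hResC
    obtain ⟨G, A1, hG, ⟨ι1, a0, hι1, ha0, hex1⟩, hResA1⟩ := aux_hasFRes_step hResA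
    rcases hG with hGF | hGs
    swap
    · exact aux_fdimLE_of_subsingleton _ _ (aux_subsingleton_of_surj a0 ha0 hGs)
    -- A' = ker (g ∘ pB)
    let pBl : F0B →ₗ[R] B := pB.hom
    let gl : B →ₗ[R] C := g.hom
    let fl : A →ₗ[R] B := f.hom
    let a0l : G →ₗ[R] A := a0.hom
    let w : F0B →ₗ[R] C := gl.comp pBl
    have hw : Function.Surjective w := fun c => by
      obtain ⟨b, hb⟩ := hsurj c
      obtain ⟨v, hv⟩ := hpB b
      exact ⟨v, by show g (pB v) = c; rw [hv, hb]⟩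
    let A' : ModuleCat.{u} R := ModuleCat.of R (LinearMap.ker w)
    have sesA' : IsSES A' F0B C :=
      ⟨ModuleCat.ofHom (LinearMap.ker w).subtype, ModuleCat.ofHom w, Subtype.val_injective, hw, by exact aux_exact_subtype w⟩
    have hResA' : HasFRes F A' := hF.1 A' F0B C hF0BF sesA' hResC
    have hdimA' : FDimLE F n A' := by
      refine aux_fdim_cut hF n 0 C A' ?_ ⟨F0B, hF0BF, sesA'⟩ hResA'
      show FDimLE F (0 + n + 1) C
      have e : 0 + n + 1 = n + 1 := by omega
      rw [e]
      exact hC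
    -- W = ker (Θ : G × F0B → B)
    let Θ : (G × F0B : Type u) →ₗ[R] B := LinearMap.coprod (fl.comp a0l) pBl
    have hΘsurj : Function.Surjective Θ := fun b => by
      obtain ⟨v, hv⟩ := hpB b
      refine ⟨(0, v), ?_⟩
      show f (a0 0) + pB v = b
      rw [map_zero, map_zero, zero_add, hv]
    let S : ModuleCat.{u} R := ModuleCat.of R (G × F0B)
    let W : ModuleCat.{u} R := ModuleCat.of R (LinearMap.ker Θ)
    have sesW : IsSES W S B :=
      ⟨ModuleCat.ofHom (LinearMap.ker Θ).subtype, ModuleCat.ofHom Θ, Subtype.val_injective, hΘsurj,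
        by exact aux_exact_subtype Θ⟩
    have hResW : HasFRes F W := hF.1 W S B (hsum G F0B hGF hF0BF) sesW hResB
    have hdimW : FDimLE F n W := by
      refine aux_fdim_cut hF n 0 B W ?_ ⟨S, hsum G F0B hGF hF0BF, sesW⟩ hResW
      show FDimLE F (0 + n + 1) B
      have e : 0 + n + 1 = n + 1 := by omega
      rw [e]
      exact hB'
    -- SES A1 → W → A'
    have hαmem : ∀ x : A1, ((ι1 x, 0) : G × F0B) ∈ LinearMap.ker Θ := by
      intro x
      rw [LinearMap.mem_ker]
      show f (a0 (ι1 x)) + pB 0 = 0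
      rw [hex1.apply_apply_eq_zero x, map_zero, map_zero, add_zero]
    let ι1l : A1 →ₗ[R] G := ι1.hom
    let α : A1 →ₗ[R] W :=
      LinearMap.codRestrict (LinearMap.ker Θ) (LinearMap.prod ι1l 0) hαmem
    have hαinj : Function.Injective α := fun a b hab =>
      hι1 (congrArg Prod.fst (congrArg Subtype.val hab))
    have hβmem : ∀ x : LinearMap.ker Θ, (x : G × F0B).2 ∈ LinearMap.ker w := by
      intro x
      rw [LinearMap.mem_ker]
      show g (pB (x : G × F0B).2) = 0
      have hx : f (a0 (x : G × F0B).1) + pB (x : G × F0B).2 = 0 :=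
        LinearMap.mem_ker.mp x.2
      have h2 : pBl (x : G × F0B).2 = -f (a0 (x : G × F0B).1) := by
        rw [eq_neg_iff_add_eq_zero, add_comm]
        exact hx
      show gl (pBl (x : G × F0B).2) = 0
      rw [h2, map_neg]
      rw [hex.apply_apply_eq_zero (a0 (x : G × F0B).1), neg_zero]
    let β : W →ₗ[R] A' :=
      LinearMap.codRestrict (LinearMap.ker w)
        ((LinearMap.snd R G F0B).comp (LinearMap.ker Θ).subtype) hβmem
    have hβsurj : Function.Surjective β := by
      rintro ⟨v, hv⟩
      have hv' : pB v ∈ Set.range f := (hex (pB v)).mp (LinearMap.mem_ker.mp hv)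
      obtain ⟨a, ha⟩ := hv'
      obtain ⟨u, hu⟩ := ha0 a
      have hmem : ((-u, v) : G × F0B) ∈ LinearMap.ker Θ := by
        rw [LinearMap.mem_ker]
        show f (a0 (-u)) + pB v = 0
        rw [map_neg, map_neg, hu, ha, neg_add_cancel]
      exact ⟨⟨(-u, v), hmem⟩, Subtype.ext rfl⟩
    have hexαβ : Function.Exact α β := by
      rintro ⟨⟨u, v⟩, hx⟩
      constructor
      · intro h0
        have hv : v = 0 := congrArg Subtype.val h0
        have hu : f (a0 u) = 0 := by
          have hx' : f (a0 u) + pB v = 0 := LinearMap.mem_ker.mp hx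
          rw [hv, map_zero, add_zero] at hx'
          exact hx'
        have hu' : a0 u = 0 := hinj (by rw [hu, map_zero])
        obtain ⟨t, ht⟩ := (hex1 u).mp hu'
        refine ⟨t, ?_⟩
        exact Subtype.ext (Prod.ext ht hv.symm)
      · rintro ⟨t, ht⟩
        rw [← ht]
        exact Subtype.ext rfl
    have hdimA1 : FDimLE F n A1 := ih A1 W A' (ModuleCat.ofHom α) (ModuleCat.ofHom β) hαinj hβsurj hexαβ hdimW hdimA'
    exact ⟨A1, G, Or.inl hGF, ⟨ι1, a0, hι1, ha0, hex1⟩, hdimA1⟩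


end
theorem stmt4 {R : Type u} [Ring R] (F : ModuleCat.{u} R → Prop)
    (hF : DefinesHomDim F) (hsum : ClosedUnderFinSums F)
    (A B C : ModuleCat.{u} R) (f : A ⟶ B) (g : B ⟶ C)
    (hinj : Function.Injective f) (hsurj : Function.Surjective g)
    (hex : Function.Exact f g) (i : ℕ)
    (hB : FDimLE F i B) (hC : FDimLE F i C) :
    FDimLE F i A :=
  aux_main hF hsum i A B C f g hinj hsurj hex hB hC
end

section
/- Let R be a ring, F a class of left R-modules defining a homological dimension and closed under finite direct sums. For a short exact sequence 0 → A → B → C → 0: if A and B have F-dimension ≤ i, then C has F-dimension ≤ i + 1. -/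
open CategoryTheory

universe u

namespace Stmt5Aux

variable {R : Type u} [Ring R] {F : ModuleCat.{u} R → Prop}

/-- The zero module. -/
abbrev Z (R : Type u) [Ring R] : ModuleCat.{u} R := ModuleCat.of R PUnit.{u+1}

lemma sub_of_surj {M N : ModuleCat.{u} R} (f : M ⟶ N) (hf : Function.Surjective f)
    (h : Subsingleton M) : Subsingleton N := by
  constructor
  intro a b
  obtain ⟨a', rfl⟩ := hf a
  obtain ⟨b', rfl⟩ := hf b
  rw [Subsingleton.elim a' b']

lemma sub_of_inj {M N : ModuleCat.{u} R} (f : M ⟶ N) (hf : Function.Injective f)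
    (h : Subsingleton N) : Subsingleton M :=
  ⟨fun a b => hf (Subsingleton.elim _ _)⟩

lemma sub_isSES {U V W : ModuleCat.{u} R} (hU : Subsingleton U) (hV : Subsingleton V)
    (hW : Subsingleton W) : IsSES U V W := by
  refine ⟨0, 0, fun a b _ => Subsingleton.elim a b, fun w => ⟨0, Subsingleton.elim _ _⟩, ?_⟩
  intro v
  constructor
  · intro _; exact ⟨0, Subsingleton.elim _ _⟩
  · intro _; exact Subsingleton.elim _ _

lemma sub_dim {M : ModuleCat.{u} R} (hM : Subsingleton M) : ∀ n, FDimLE F n M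
  | 0 => Or.inr hM
  | n + 1 => ⟨M, M, Or.inr hM, sub_isSES hM hM hM, sub_dim hM n⟩

lemma isSES_zero_id (M : ModuleCat.{u} R) : IsSES (Z R) M M := by
  refine ⟨0, ModuleCat.ofHom LinearMap.id, fun a b _ => Subsingleton.elim a b,
    fun m => ⟨m, rfl⟩, ?_⟩
  intro m
  constructor
  · intro h
    exact ⟨0, h.symm⟩
  · rintro ⟨z, rfl⟩
    rfl

lemma mono : ∀ {n : ℕ} {M : ModuleCat.{u} R}, FDimLE F n M → FDimLE F (n + 1) M
  | 0, M, h => ⟨Z R, M, h, isSES_zero_id M, Or.inr inferInstance⟩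
  | n + 1, M, ⟨K, F0, h1, h2, h3⟩ => ⟨K, F0, h1, h2, mono h3⟩

lemma mono' {m n : ℕ} {M : ModuleCat.{u} R} (h : m ≤ n) (hd : FDimLE F m M) :
    FDimLE F n M := by
  induction h with
  | refl => exact hd
  | step _ ih => exact mono ih

end Stmt5Aux

namespace Stmt5Aux2
open Stmt5Aux

variable {R : Type u} [Ring R] {F : ModuleCat.{u} R → Prop}

lemma chaindim : ∀ (m : ℕ) (K Fo : ℕ → ModuleCat.{u} R),
    (∀ l, MemF0 F (Fo l) ∧ IsSES (K (l + 1)) (Fo l) (K l)) → MemF0 F (K m) →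
    FDimLE F m (K 0)
  | 0, _, _, _, h => h
  | m + 1, K, Fo, hc, hK =>
    ⟨K 1, Fo 0, (hc 0).1, (hc 0).2,
      chaindim m (fun j => K (j + 1)) (fun j => Fo (j + 1)) (fun l => hc (l + 1)) hK⟩

lemma chainker : ∀ (m : ℕ) (K Fo : ℕ → ModuleCat.{u} R),
    (∀ l, IsSES (K (l + 1)) (Fo l) (K l)) → (∀ l, l ≤ m → F (Fo l)) →
    IsFKernel F m (K (m + 1)) (K 0)
  | 0, _, Fo, hc, hf => ⟨Fo 0, hf 0 le_rfl, hc 0⟩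
  | m + 1, K, Fo, hc, hf =>
    ⟨K 1, Fo 0, hf 0 (by omega), hc 0,
      chainker m (fun j => K (j + 1)) (fun j => Fo (j + 1)) (fun l => hc (l + 1))
        (fun l hl => hf (l + 1) (by omega))⟩

lemma hasres : ∀ (n : ℕ) (M : ModuleCat.{u} R), FDimLE F n M → HasFRes F M := by
  intro n
  induction n with
  | zero =>
    intro M h
    rcases h with h | h
    · refine ⟨fun j => match j with | 0 => M | _ + 1 => Z R,
        fun j => match j with | 0 => M | _ + 1 => Z R, rfl, ?_⟩
      intro n
      match n with
      | 0 =>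
        refine ⟨Or.inl h, isSES_zero_id M⟩
      | k + 1 =>
        exact ⟨Or.inr inferInstance, sub_isSES inferInstance inferInstance inferInstance⟩
    · exact ⟨fun _ => M, fun _ => M, rfl, fun _ => ⟨Or.inr h, sub_isSES h h h⟩⟩
  | succ n ih =>
    rintro M ⟨K0, F0, h1, h2, h3⟩
    obtain ⟨K', Fo', hK0, hch⟩ := ih K0 h3
    refine ⟨fun j => match j with | 0 => M | j + 1 => K' j,
      fun j => match j with | 0 => F0 | j + 1 => Fo' j, rfl, ?_⟩
    intro n
    match n with
    | 0 =>
      refine ⟨h1, ?_⟩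
      show IsSES (K' 0) F0 M
      rw [hK0]; exact h2
    | k + 1 => exact hch k

lemma key (hF : DefinesHomDim F) :
    ∀ (n : ℕ) (X G M' : ModuleCat.{u} R), HasFRes F X → F G → IsSES X G M' →
    FDimLE F (n + 1) M' → FDimLE F n X := by
  intro n X G M' hres hG hses hM'
  obtain ⟨K, Fo, hK0, hch⟩ := hres
  by_cases hj : ∃ j, j < n ∧ Subsingleton (Fo j)
  · obtain ⟨j, hjn, hs⟩ := hj
    obtain ⟨a, b, ai, _, _⟩ := (hch j).2
    have hsub : Subsingleton (K (j + 1)) := sub_of_inj a ai hs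
    have := chaindim (j + 1) K Fo hch (Or.inr hsub)
    rw [hK0] at this
    exact mono' (by omega) this
  · push_neg at hj
    have hFo : ∀ l, l < n → F (Fo l) := by
      intro l hl
      rcases (hch l).1 with h | h
      · exact h
      · exact absurd h (not_subsingleton_iff_nontrivial.mpr (hj l hl))
    have hKn : F (K n) := by
      match n with
      | 0 =>
        exact hF.2 0 (K 0) M' hM' ⟨G, hG, hK0.symm ▸ hses⟩
      | m + 1 =>
        refine hF.2 (m + 1) (K (m + 1)) M' hM'
          ⟨K 0, G, hG, hK0.symm ▸ hses, ?_⟩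
        exact chainker m K Fo (fun l => (hch l).2) (fun l hl => hFo l (by omega))
    have := chaindim n K Fo hch (Or.inl hKn)
    rw [hK0] at this
    exact this

end Stmt5Aux2

namespace Stmt5Main
open Stmt5Aux Stmt5Aux2

variable {R : Type u} [Ring R] {F : ModuleCat.{u} R → Prop}

lemma dim_of_bij {M N : ModuleCat.{u} R} (e : M ⟶ N) (he : Function.Bijective e) :
    ∀ n, FDimLE F n M → FDimLE F (n + 1) N := by
  intro n
  induction n generalizing M N with
  | zero =>
    intro h
    refine ⟨Z R, M, h, ⟨0, e, fun a b _ => Subsingleton.elim a b, he.2, ?_⟩,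
      Or.inr inferInstance⟩
    intro m
    constructor
    · intro hm
      have h0 : m = 0 := he.1 (by rw [hm, map_zero])
      exact ⟨0, h0.symm⟩
    · rintro ⟨z, rfl⟩
      rw [show (0 : Z R ⟶ M) z = 0 from rfl, map_zero]
  | succ k ihk =>
    rintro ⟨K, F0, h1, ⟨a, b, ai, bs, ab⟩, h3⟩
    refine ⟨K, F0, h1, ⟨a, b ≫ e, ai, he.2.comp bs, ?_⟩, mono h3⟩
    intro x
    constructor
    · intro hx
      have hb : b x = 0 := he.1 (by rw [map_zero]; exact hx)
      exact (ab x).mp hb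
    · intro hx
      have hb : b x = 0 := (ab x).mpr hx
      show e (b x) = 0
      rw [hb, map_zero]

theorem main (F : ModuleCat.{u} R → Prop) (hF : DefinesHomDim F)
    (hsum : ClosedUnderFinSums F) :
    ∀ (i : ℕ) (A B C : ModuleCat.{u} R) (f : A ⟶ B) (g : B ⟶ C),
      Function.Injective f → Function.Surjective g → Function.Exact f g →
      FDimLE F i A → FDimLE F i B → FDimLE F (i + 1) C := by
  intro i
  induction i with
  | zero =>
    intro A B C f g hinj hsurj hex hA hB
    exact ⟨A, B, hB, ⟨f, g, hinj, hsurj, hex⟩, hA⟩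
  | succ n ih =>
    intro A B C f g hinj hsurj hex hA hB
    have hB' := hB
    obtain ⟨K_B, Q, hQ, ⟨β, π, hβi, hπs, hβπ⟩, hKB⟩ := hB
    rcases hQ with hQ | hQ
    swap
    · exact sub_dim (sub_of_surj g hsurj (sub_of_surj π hπs hQ)) _
    obtain ⟨K_A, P, hP, ⟨κ, α, hκi, hαs, hκα⟩, hKA⟩ := hA
    rcases hP with hP | hP
    swap
    · -- A is subsingleton, so g is bijective
      haveI hsubA : Subsingleton ↥A := sub_of_surj α hαs hP
      have hgi : Function.Injective g := by
        intro b1 b2 h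
        have h0 : g (b1 - b2) = 0 := by rw [map_sub, h, sub_self]
        obtain ⟨a, ha⟩ := (hex _).mp h0
        rw [Subsingleton.elim a 0, map_zero] at ha
        exact sub_eq_zero.mp ha.symm
      exact dim_of_bij g ⟨hgi, hsurj⟩ (n + 1) hB'
    -- main case : both P and Q are in F
    let σ : ↥Q →ₗ[R] ↥C := LinearMap.comp g.hom π.hom
    have hσs : Function.Surjective σ := hsurj.comp hπs
    let Lsub : Submodule R ↥Q := LinearMap.ker σ
    let L : ModuleCat.{u} R := ModuleCat.of R ↥Lsub
    let ι : ↥Lsub →ₗ[R] ↥Q := Lsub.subtype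
    have hsesLQC : IsSES L Q C := by
      refine ⟨ModuleCat.ofHom ι, ModuleCat.ofHom σ, Submodule.injective_subtype _, hσs, ?_⟩
      intro q
      constructor
      · intro h; exact ⟨⟨q, LinearMap.mem_ker.mpr h⟩, rfl⟩
      · rintro ⟨⟨q', hq'⟩, rfl⟩; exact LinearMap.mem_ker.mp hq'
    -- the map ψ : L → A
    let e := LinearEquiv.ofInjective (f.hom) hinj
    have hmem : ∀ l : ↥Lsub, π (ι l) ∈ LinearMap.range f.hom := by
      intro l
      have h0 : g (π (ι l)) = 0 := LinearMap.mem_ker.mp l.2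
      obtain ⟨a, ha⟩ := (hex _).mp h0
      exact ⟨a, ha⟩
    let ρ : ↥Lsub →ₗ[R] ↥(LinearMap.range f.hom) :=
      LinearMap.codRestrict _ (LinearMap.comp π.hom ι) hmem
    let ψ : ↥Lsub →ₗ[R] ↥A := LinearMap.comp (e.symm.toLinearMap) ρ
    have fψ : ∀ l : ↥Lsub, f (ψ l) = π (ι l) :=
      fun l => congrArg Subtype.val (e.apply_symm_apply (ρ l))
    have hψs : Function.Surjective ψ := by
      intro a
      obtain ⟨q, hq⟩ := hπs (f a)
      have h0 : σ q = 0 := by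
        show g (π q) = 0
        rw [hq]; exact hex.apply_apply_eq_zero a
      refine ⟨⟨q, LinearMap.mem_ker.mpr h0⟩, ?_⟩
      apply hinj
      rw [fψ]; exact hq
    have hβ0 : ∀ k, π (β k) = 0 := hβπ.apply_apply_eq_zero
    let β' : ↥K_B →ₗ[R] ↥Lsub := LinearMap.codRestrict Lsub β.hom
      (fun k => LinearMap.mem_ker.mpr (by show g (π (β k)) = 0; rw [hβ0 k, map_zero]))
    have hsesKLA : IsSES K_B L A := by
      refine ⟨ModuleCat.ofHom β', ModuleCat.ofHom ψ, ?_, hψs, ?_⟩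
      · intro x y h
        exact hβi (congrArg Subtype.val h)
      · intro l
        constructor
        · intro h
          have h' : ψ l = (0 : ↥A) := h
          have h1 : π (ι l) = 0 := by rw [← fψ l, h', map_zero]
          obtain ⟨k, hk⟩ := (hβπ _).mp h1
          exact ⟨k, Subtype.ext hk⟩
        · rintro ⟨k, rfl⟩
          apply hinj
          show f (ψ (β' k)) = f 0
          rw [fψ, map_zero]
          exact hβ0 k
    -- the pullback X ⊆ Q × P
    let QP : ModuleCat.{u} R := ModuleCat.of R (↥Q × ↥P)
    let τ : (↥Q × ↥P) →ₗ[R] ↥B :=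
      LinearMap.comp π.hom (LinearMap.fst R ↥Q ↥P) -
        LinearMap.comp (LinearMap.comp f.hom α.hom) (LinearMap.snd R ↥Q ↥P)
    have hτ : ∀ x : ↥Q × ↥P, τ x = π x.1 - f (α x.2) := fun _ => rfl
    have hτs : Function.Surjective τ := by
      intro b
      obtain ⟨q, hq⟩ := hπs b
      exact ⟨(q, 0), by rw [hτ]; simp [hq]⟩
    let Xsub : Submodule R (↥Q × ↥P) := LinearMap.ker τ
    let X : ModuleCat.{u} R := ModuleCat.of R ↥Xsub
    have hsesXQPB : IsSES X QP B := by
      refine ⟨ModuleCat.ofHom Xsub.subtype, ModuleCat.ofHom τ, Submodule.injective_subtype _, hτs, ?_⟩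
      intro x
      constructor
      · intro h; exact ⟨⟨x, LinearMap.mem_ker.mpr h⟩, rfl⟩
      · rintro ⟨⟨x', hx'⟩, rfl⟩; exact LinearMap.mem_ker.mp hx'
    have hFQP : F QP := hsum Q P hQ hP
    have hresB : HasFRes F B := hasres (n + 1) B hB'
    have hresX : HasFRes F X := hF.1 X QP B hFQP hsesXQPB hresB
    have hdX : FDimLE F n X := key hF n X QP B hresX hFQP hsesXQPB hB'
    -- SES  0 → K_A → X → L → 0
    have hα0 : ∀ k, α (κ k) = 0 := hκα.apply_apply_eq_zero
    let u : ↥K_A →ₗ[R] ↥Xsub := LinearMap.codRestrict Xsub (LinearMap.prod 0 κ.hom)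
      (fun k => LinearMap.mem_ker.mpr (by
        rw [hτ]
        simp [LinearMap.prod_apply, hα0 k]))
    let v : ↥Xsub →ₗ[R] ↥Lsub := LinearMap.codRestrict Lsub
      (LinearMap.comp (LinearMap.fst R ↥Q ↥P) Xsub.subtype)
      (fun x => LinearMap.mem_ker.mpr (by
        have hx : π x.1.1 - f (α x.1.2) = 0 := LinearMap.mem_ker.mp x.2
        show g (π x.1.1) = 0
        rw [sub_eq_zero.mp hx]
        exact hex.apply_apply_eq_zero _))
    have hsesKAXL : IsSES (K_A) X L := by
      refine ⟨ModuleCat.ofHom u, ModuleCat.ofHom v, ?_, ?_, ?_⟩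
      · intro x y h
        exact hκi (congrArg Prod.snd (congrArg Subtype.val h))
      · intro l
        obtain ⟨p, hp⟩ := hαs (ψ l)
        have hm : (ι l, p) ∈ Xsub := LinearMap.mem_ker.mpr (by
          rw [hτ]
          show π (ι l) - f (α p) = 0
          rw [hp, fψ l, sub_self])
        exact ⟨⟨(ι l, p), hm⟩, Subtype.ext rfl⟩
      · intro x
        constructor
        · intro h
          have h1 : x.1.1 = 0 := congrArg Subtype.val h
          have hx : π x.1.1 - f (α x.1.2) = 0 := LinearMap.mem_ker.mp x.2
          rw [h1, map_zero, zero_sub, neg_eq_zero] at hx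
          have h2 : α x.1.2 = 0 := hinj (by rw [hx, map_zero])
          obtain ⟨k, hk⟩ := (hκα _).mp h2
          exact ⟨k, Subtype.ext (Prod.ext h1.symm hk)⟩
        · rintro ⟨k, rfl⟩
          exact Subtype.ext rfl
    obtain ⟨u', v', hu, hv, huv⟩ := hsesKAXL
    have hdL : FDimLE F (n + 1) L := ih K_A X L u' v' hu hv huv hKA hdX
    exact ⟨L, Q, Or.inl hQ, hsesLQC, hdL⟩

end Stmt5Main

theorem stmt5 {R : Type u} [Ring R] (F : ModuleCat.{u} R → Prop)
    (hF : DefinesHomDim F) (hsum : ClosedUnderFinSums F)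
    (A B C : ModuleCat.{u} R) (f : A ⟶ B) (g : B ⟶ C)
    (hinj : Function.Injective f) (hsurj : Function.Surjective g)
    (hex : Function.Exact f g) (i : ℕ)
    (hA : FDimLE F i A) (hB : FDimLE F i B) :
    FDimLE F (i + 1) C := by
  exact Stmt5Main.main F hF hsum i A B C f g hinj hsurj hex hA hB
end

section
/- Let R be a ring and F a class of left R-modules defining a homological dimension and containing all projective modules. Then F^{⊥_1} = F^{⊥_∞}, i.e., if Ext^1_R(F, M) = 0 for all F ∈ F, then Ext^i_R(F, M) = 0 for all i ≥ 1 and all F ∈ F. -/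
open CategoryTheory

universe u

noncomputable section Stmt10Aux

open CategoryTheory Limits

namespace Stmt10

section Splice

variable {C : Type*} [Category C] [Abelian C] [EnoughProjectives C]
variable {X : C} (P0 : C) (π0 : P0 ⟶ X) (Q : ProjectiveResolution (kernel π0))

/-- Objects of the spliced resolution. -/
def spX : ℕ → C
  | 0 => P0
  | n + 1 => Q.complex.X n

/-- Differential in degree `1 → 0` of the spliced resolution. -/
def d10 : Q.complex.X 0 ⟶ P0 :=
  Q.π.f 0 ≫ kernel.ι π0

/-- Differentials of the spliced resolution. -/
def spd : ∀ i j, spX P0 π0 Q i ⟶ spX P0 π0 Q j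
  | 1, 0 => d10 P0 π0 Q
  | (n + 2), (m + 1) => Q.complex.d (n + 1) m
  | _, _ => 0

/-- The spliced chain complex. -/
def spC : ChainComplex C ℕ where
  X := spX P0 π0 Q
  d := spd P0 π0 Q
  shape i j hij := by
    match i, j with
    | 0, j => rfl
    | 1, 0 => exact absurd (by simp) hij
    | 1, m + 1 => rfl
    | n + 2, 0 => rfl
    | n + 2, m + 1 =>
      apply Q.complex.shape
      intro h'
      simp only [ComplexShape.down_Rel] at h' hij
      omega
  d_comp_d' i j k hij hjk := by
    simp only [ComplexShape.down_Rel] at hij hjk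
    subst hij; subst hjk
    match k with
    | 0 =>
      show Q.complex.d 1 0 ≫ (Q.π.f 0 ≫ kernel.ι π0) = 0
      erw [← Category.assoc, Q.complex_d_comp_π_f_zero, zero_comp]
    | k + 1 =>
      exact Q.complex.d_comp_d _ _ _

/-- The augmentation of the spliced complex. -/
def spπ : spC P0 π0 Q ⟶ (ChainComplex.single₀ C).obj X :=
  (ChainComplex.toSingle₀Equiv _ _).symm ⟨π0, by
    show (Q.π.f 0 ≫ kernel.ι π0) ≫ π0 = 0
    erw [Category.assoc, kernel.condition, comp_zero]⟩

lemma sp_exact_deg0 (w : (Q.π.f 0 ≫ kernel.ι π0) ≫ π0 = 0) :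
    (ShortComplex.mk (Q.π.f 0 ≫ kernel.ι π0) π0 w).Exact := by
  let α : ShortComplex.mk (Q.π.f 0 ≫ kernel.ι π0) π0 w ⟶
      ShortComplex.mk (kernel.ι π0) π0 (kernel.condition π0) :=
    { τ₁ := Q.π.f 0
      τ₂ := 𝟙 _
      τ₃ := 𝟙 _ }
  have : Epi α.τ₁ := by dsimp [α]; exact (inferInstance : Epi (Q.π.f 0))
  have : IsIso α.τ₂ := by dsimp [α]; infer_instance
  have : Mono α.τ₃ := by dsimp [α]; infer_instance
  rw [ShortComplex.exact_iff_of_epi_of_isIso_of_mono α]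
  exact ShortComplex.exact_of_f_is_kernel _ (kernelIsKernel π0)

lemma sp_exact_deg1 (w : Q.complex.d 1 0 ≫ (Q.π.f 0 ≫ kernel.ι π0) = 0) :
    (ShortComplex.mk (Q.complex.d 1 0) (Q.π.f 0 ≫ kernel.ι π0) w).Exact := by
  let α : ShortComplex.mk (Q.complex.d 1 0) (Q.π.f 0) Q.complex_d_comp_π_f_zero ⟶
      ShortComplex.mk (Q.complex.d 1 0) (Q.π.f 0 ≫ kernel.ι π0) w :=
    { τ₁ := 𝟙 _
      τ₂ := 𝟙 _
      τ₃ := kernel.ι π0 }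
  have : Epi α.τ₁ := by dsimp [α]; infer_instance
  have : IsIso α.τ₂ := by dsimp [α]; infer_instance
  have : Mono α.τ₃ := by dsimp [α]; infer_instance
  rw [← ShortComplex.exact_iff_of_epi_of_isIso_of_mono α]
  exact Q.exact₀

lemma spC_exactAt_succ (n : ℕ) : (spC P0 π0 Q).ExactAt (n + 1) := by
  rw [HomologicalComplex.exactAt_iff' _ (n + 2) (n + 1) n (by simp) (by simp)]
  match n with
  | 0 =>
    exact sp_exact_deg1 P0 π0 Q (by
      show Q.complex.d 1 0 ≫ (Q.π.f 0 ≫ kernel.ι π0) = 0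
      erw [← Category.assoc, Q.complex_d_comp_π_f_zero, zero_comp])
  | n + 1 =>
    exact Q.exact_succ n

/-- The spliced projective resolution of `X`. -/
def spRes [Projective P0] [Epi π0] : ProjectiveResolution X where
  complex := spC P0 π0 Q
  projective n := by
    cases n with
    | zero => exact ‹Projective P0›
    | succ n => exact Q.projective n
  π := spπ P0 π0 Q
  quasiIso := ⟨fun n => by
    cases n with
    | zero =>
      rw [ChainComplex.quasiIsoAt₀_iff, ShortComplex.quasiIso_iff_of_zeros']
      · refine (ShortComplex.exact_and_epi_g_iff_of_iso ?_).2
          ⟨sp_exact_deg0 P0 π0 Q (by erw [Category.assoc, kernel.condition, comp_zero]), inferInstance⟩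
        refine ShortComplex.isoMk (Iso.refl _) (Iso.refl _) (Iso.refl _) ?_ ?_
        · dsimp
          erw [Category.id_comp, Category.comp_id]
          rfl
        · dsimp
          erw [Category.id_comp, Category.comp_id]
          exact (ChainComplex.toSingle₀Equiv_symm_apply_f_zero (C := spC P0 π0 Q) π0 _).symm
      all_goals rfl
    | succ n =>
      rw [quasiIsoAt_iff_exactAt']
      · exact spC_exactAt_succ P0 π0 Q n
      · exact ChainComplex.exactAt_succ_single_obj _ _⟩

end Splice

section ModCat

variable {R : Type u} [Ring R]

lemma subsingleton_of_isZero {S : Type*} [Ring S] {A : ModuleCat S} (h : IsZero A) :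
    Subsingleton A := by
  have hid : (𝟙 A : A ⟶ A) = 0 := h.eq_of_src _ _
  refine ⟨fun a b => ?_⟩
  have ha : (𝟙 A : A ⟶ A) a = (0 : A ⟶ A) a := by rw [hid]
  have hb : (𝟙 A : A ⟶ A) b = (0 : A ⟶ A) b := by rw [hid]
  have ha' : a = 0 := by simpa using ha
  have hb' : b = 0 := by simpa using hb
  rw [ha', hb']

lemma extShift (X M : ModuleCat.{u} R) (n : ℕ)
    (h : ExtZero (n + 1) (kernel (Projective.π X)) M) :
    ExtZero (n + 2) X M := by
  let Q : ProjectiveResolution (kernel (Projective.π X)) :=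
    ProjectiveResolution.of (kernel (Projective.π X))
  let P : ProjectiveResolution X := spRes (Projective.over X) (Projective.π X) Q
  have h1 : IsZero ((Q.complex.linearYonedaObj ℤ M).homology (n + 1)) :=
    IsZero.of_iso (@ModuleCat.isZero_of_subsingleton _ _ _ h) (Q.isoExt (n + 1) M).symm
  have h2 : (Q.complex.linearYonedaObj ℤ M).ExactAt (n + 1) :=
    (HomologicalComplex.exactAt_iff_isZero_homology _ _).2 h1
  rw [HomologicalComplex.exactAt_iff' _ n (n + 1) (n + 2)
    (ComplexShape.prev_eq' _ (by simp)) (ComplexShape.next_eq' _ (by simp))] at h2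
  have h3 : (P.complex.linearYonedaObj ℤ M).ExactAt (n + 2) := by
    rw [HomologicalComplex.exactAt_iff' _ (n + 1) (n + 2) (n + 3)
      (ComplexShape.prev_eq' _ (by simp)) (ComplexShape.next_eq' _ (by simp))]
    exact h2
  have h4 : IsZero ((P.complex.linearYonedaObj ℤ M).homology (n + 2)) :=
    (HomologicalComplex.exactAt_iff_isZero_homology _ _).1 h3
  exact subsingleton_of_isZero (IsZero.of_iso h4 (P.isoExt (n + 2) M))

lemma sesSelf (X : ModuleCat.{u} R) : IsSES (ModuleCat.of R PUnit) X X := by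
  refine ⟨0, 𝟙 X, ?_, ?_, ?_⟩
  · intro a b _
    exact Subsingleton.elim a b
  · exact fun x => ⟨x, rfl⟩
  · intro y
    constructor
    · intro hy
      refine ⟨0, ?_⟩
      simpa using hy.symm
    · rintro ⟨x, rfl⟩
      simp

lemma sesKernel (X : ModuleCat.{u} R) :
    IsSES (kernel (Projective.π X)) (Projective.over X) X := by
  refine ⟨kernel.ι _, Projective.π X, ?_, ?_, ?_⟩
  · exact (ModuleCat.mono_iff_injective _).1 inferInstance
  · exact (ModuleCat.epi_iff_surjective _).1 inferInstance
  · rw [← ShortComplex.ShortExact.moduleCat_exact_iff_function_exact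
      (ShortComplex.mk (kernel.ι (Projective.π X)) (Projective.π X)
        (kernel.condition _))]
    exact ShortComplex.exact_of_f_is_kernel _ (kernelIsKernel _)

lemma kernel_mem (F : ModuleCat.{u} R → Prop) (hF : DefinesHomDim F)
    (hproj : ∀ M : ModuleCat.{u} R, Module.Projective R M → F M)
    (Fm : ModuleCat.{u} R) (hFm : F Fm) :
    F (kernel (Projective.π Fm)) := by
  refine hF.2 0 _ Fm ?_ ?_
  · exact ⟨ModuleCat.of R PUnit, Fm, Or.inl hFm, sesSelf Fm,
      Or.inr inferInstance⟩
  · refine ⟨Projective.over Fm, hproj _ ?_, sesKernel Fm⟩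
    exact (IsProjective.iff_projective _).mpr
      (Projective.of_iso (Iso.refl _).symm (inferInstance : Projective (Projective.over Fm)))

end ModCat

end Stmt10

end Stmt10Aux

theorem stmt10 {R : Type u} [Ring R] (F : ModuleCat.{u} R → Prop)
    (hF : DefinesHomDim F)
    (hproj : ∀ M : ModuleCat.{u} R, Module.Projective R M → F M)
    (M : ModuleCat.{u} R) (h1 : ∀ Fm, F Fm → ExtZero 1 Fm M) :
    ∀ i, 1 ≤ i → ∀ Fm, F Fm → ExtZero i Fm M := by
  intro i hi
  induction i with
  | zero => exact absurd hi (by omega)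
  | succ j ih =>
    cases j with
    | zero => exact h1
    | succ m =>
      intro Fm hFm
      exact Stmt10.extShift Fm M m
        (ih (by omega) _ (Stmt10.kernel_mem F hF hproj Fm hFm))
end

section
/- Let R be a ring, n ∈ ℕ, and G a class of left R-modules each of injective dimension ≤ n. Let F = {M : Ext^i_R(M, G) = 0 for all 1 ≤ i ≤ m, G ∈ G} for some m ≥ 1. Then every left R-module has F-dimension ≤ n. -/
open CategoryTheory

universe u

noncomputable section
open CategoryTheory Limits

variable {R : Type u} [Ring R]

lemma subsingleton_of_iso {A B : ModuleCat.{u} ℤ} (e : A ≅ B) (h : Subsingleton B) :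
    Subsingleton A := by
  have hinj : Function.Injective e.hom := (ConcreteCategory.bijective_of_isIso e.hom).1
  exact ⟨fun a b => hinj (h.allEq _ _)⟩

lemma exact_transfer {A B C : ModuleCat.{u} R} {f f' : A ⟶ B} {g g' : B ⟶ C}
    {w : f ≫ g = 0} {w' : f' ≫ g' = 0} (hf : f = f') (hg : g = g')
    (h : (ShortComplex.mk f g w).Exact) : (ShortComplex.mk f' g' w').Exact := by
  subst hf; subst hg; exact h

/-- The spliced resolution of `M`, given a resolution `Q` of `K` and a SES `0 → K → P → M → 0`. -/
lemma ext_shift {K P M Y : ModuleCat.{u} R} [Projective P]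
    (ι : K ⟶ P) (π : P ⟶ M) (w : ι ≫ π = 0)
    (hinj : Function.Injective ι) (hsurj : Function.Surjective π)
    (hex : Function.Exact ι π)
    {j : ℕ} (hj : 1 ≤ j) (h : ExtZero (j + 1) M Y) : ExtZero j K Y := by
  obtain ⟨Q⟩ := (HasProjectiveResolution.out (Z := K))
  have hepi : Epi π := (ModuleCat.epi_iff_surjective π).2 hsurj
  have hf0surj : Function.Surjective (Q.π.f 0) :=
    (ModuleCat.epi_iff_surjective _).1 inferInstance
  -- the spliced complex
  let Xs : ℕ → ModuleCat.{u} R := fun n => match n with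
    | 0 => P
    | (n+1) => Q.complex.X n
  let ds : ∀ n, Xs (n+1) ⟶ Xs n := fun n => match n with
    | 0 => Q.π.f 0 ≫ ι
    | (n+1) => Q.complex.d (n+1) n
  have hds : ∀ n, ds (n+1) ≫ ds n = 0 := by
    intro n
    match n with
    | 0 =>
      show Q.complex.d 1 0 ≫ Q.π.f 0 ≫ ι = 0
      exact (Category.assoc _ _ _).symm.trans
        ((congrArg (· ≫ ι) Q.complex_d_comp_π_f_zero).trans zero_comp)
    | (n+1) =>
      show Q.complex.d (n+2) (n+1) ≫ Q.complex.d (n+1) n = 0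
      simp
  let Rc : ChainComplex (ModuleCat.{u} R) ℕ := ChainComplex.of Xs ds hds
  have hd10 : Rc.d 1 0 = Q.π.f 0 ≫ ι := (ChainComplex.of_d _ _ 0 : Rc.d (0+1) 0 = ds 0)
  have wR : Rc.d 1 0 ≫ π = 0 := by
    rw [hd10]
    exact (Category.assoc _ _ _).trans ((congrArg (Q.π.f 0 ≫ ·) w).trans Limits.comp_zero)
  -- exactness of Rc at positive degrees
  have hexact0 : (ShortComplex.mk (Rc.d 1 0) π wR).Exact := by
    rw [ShortComplex.moduleCat_exact_iff]
    intro x hx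
    obtain ⟨k, hk⟩ := (hex x).1 hx
    obtain ⟨q, hq⟩ := hf0surj k
    refine ⟨q, ?_⟩
    show (Rc.d 1 0) q = x
    rw [hd10]
    show ι ((Q.π.f 0) q) = x
    rw [hq, hk]
  have hQ0 := Q.exact₀
  rw [ShortComplex.moduleCat_exact_iff] at hQ0
  have hRexact : ∀ n : ℕ, Rc.ExactAt (n + 1) := by
    intro n
    rw [HomologicalComplex.exactAt_iff' _ (n+2) (n+1) n (by simp) (by simp)]
    match n with
    | 0 =>
      have e2 : Rc.d 2 1 = Q.complex.d 1 0 := (ChainComplex.of_d _ _ 1 : Rc.d (1+1) 1 = ds 1)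
      rw [ShortComplex.moduleCat_exact_iff]
      intro x hx
      have hx' : ι ((Q.π.f 0) x) = 0 := by
        have : (Rc.d 1 0) x = 0 := hx
        rw [hd10] at this
        exact this
      have h0 : (Q.π.f 0) x = 0 := by
        apply hinj
        exact hx'.trans (map_zero _).symm
      obtain ⟨y, hy⟩ := hQ0 x h0
      refine ⟨y, ?_⟩
      show (Rc.d 2 1) y = x
      rw [e2]
      exact hy
    | (n+1) =>
      refine exact_transfer ?_ ?_ (Q.exact_succ n)
      · symm; exact ChainComplex.of_d _ _ (n+2)
      · symm; exact ChainComplex.of_d _ _ (n+1)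
  -- the projective resolution of M
  let res : ProjectiveResolution M :=
    { complex := Rc
      projective := fun n => by
        match n with
        | 0 => exact inferInstanceAs (Projective P)
        | (n+1) => exact inferInstanceAs (Projective (Q.complex.X n))
      π := (ChainComplex.toSingle₀Equiv _ _).symm ⟨π, wR⟩
      quasiIso := ⟨fun n => by
        cases n with
        | zero =>
          rw [ChainComplex.quasiIsoAt₀_iff, ShortComplex.quasiIso_iff_of_zeros']
          · refine (ShortComplex.exact_and_epi_g_iff_of_iso ?_).2 ⟨hexact0, hepi⟩
            exact ShortComplex.isoMk (Iso.refl _) (Iso.refl _) (Iso.refl _)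
              ((Category.id_comp _).trans (Category.comp_id _).symm)
              ((Category.id_comp _).trans (Category.comp_id _).symm)
          all_goals rfl
        | succ n =>
          rw [quasiIsoAt_iff_exactAt']
          · exact hRexact n
          · apply ChainComplex.exactAt_succ_single_obj⟩ }
  -- homology comparison
  obtain ⟨k, rfl⟩ : ∃ k, j = k + 1 := ⟨j - 1, by omega⟩
  let HR := Rc.linearYonedaObj ℤ Y
  let HQ := Q.complex.linearYonedaObj ℤ Y
  have escmid : HR.sc' (k+1) (k+2) (k+3) ≅ HQ.sc' k (k+1) (k+2) := by
    have ea : (ChainComplex.of Xs ds hds : ChainComplex (ModuleCat.{u} R) ℕ).d (k+2) (k+1) = Q.complex.d (k+1) k :=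
      by exact ChainComplex.of_d _ _ (k+1)
    have eb : (ChainComplex.of Xs ds hds : ChainComplex (ModuleCat.{u} R) ℕ).d (k+3) (k+2) = Q.complex.d (k+2) (k+1) :=
      by exact ChainComplex.of_d _ _ (k+2)
    refine ShortComplex.isoMk (Iso.refl _) (Iso.refl _) (Iso.refl _) ?_ ?_
    · dsimp [HR, HQ, Rc]
      simp only [HomologicalComplex.shortComplexFunctor'_obj_f, ChainComplex.linearYonedaObj_d]
      exact (Category.id_comp _).trans ((congrArg (fun f => ModuleCat.ofHom (Linear.leftComp ℤ Y f)) ea.symm).trans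
        (Category.comp_id _).symm)
    · dsimp [HR, HQ, Rc]
      simp only [HomologicalComplex.shortComplexFunctor'_obj_g, ChainComplex.linearYonedaObj_d]
      exact (Category.id_comp _).trans ((congrArg (fun f => ModuleCat.ofHom (Linear.leftComp ℤ Y f)) eb.symm).trans
        (Category.comp_id _).symm)
  have e3 : HR.homology (k+2) ≅ HQ.homology (k+1) :=
    (HR.homologyIsoSc' (k+1) (k+2) (k+3) (by simp) (by simp)) ≪≫
      ShortComplex.homologyMapIso escmid ≪≫
      (HQ.homologyIsoSc' k (k+1) (k+2) (by simp) (by simp)).symm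
  have e1 := res.isoExt (R := ℤ) (k+2) Y
  have e2 := Q.isoExt (R := ℤ) (k+1) Y
  -- transfer subsingleton
  have hsub : Subsingleton (((Ext ℤ (ModuleCat.{u} R) (k+2)).obj (Opposite.op M)).obj Y) := h
  exact subsingleton_of_iso (e2 ≪≫ e3.symm ≪≫ e1.symm) hsub


lemma subsingleton_of_isZero {A : ModuleCat.{u} ℤ} (h : IsZero A) : Subsingleton A := by
  have hid : 𝟙 A = 0 := h.eq_of_src _ _
  refine ⟨fun a b => ?_⟩
  calc a = (𝟙 A) a := rfl
    _ = (0 : A ⟶ A) a := by rw [hid]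
    _ = 0 := rfl
    _ = (0 : A ⟶ A) b := rfl
    _ = (𝟙 A) b := by rw [hid]
    _ = b := rfl

lemma extZero_of_projective (P Y : ModuleCat.{u} R) [Projective P] {i : ℕ} (hi : 1 ≤ i) :
    ExtZero i P Y := by
  obtain ⟨k, rfl⟩ : ∃ k, i = k + 1 := ⟨i - 1, by omega⟩
  exact subsingleton_of_isZero (isZero_Ext_succ_of_projective P Y k)

lemma stmt12_aux (G : ModuleCat.{u} R → Prop) (m : ℕ) :
    ∀ (n : ℕ) (M : ModuleCat.{u} R),
      (∀ g, G g → ∀ i, 1 ≤ i → ExtZero (n + i) M g) →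
      FDimLE (fun M : ModuleCat.{u} R =>
        ∀ i, 1 ≤ i → i ≤ m → ∀ g, G g → ExtZero i M g) n M := by
  intro n
  induction n with
  | zero =>
    intro M h
    exact Or.inl (fun i hi _ g hg => by simpa using h g hg i hi)
  | succ n ih =>
    intro M h
    let P : ModuleCat.{u} R := Projective.over M
    haveI : Projective P := Projective.projective_over M
    let π : P ⟶ M := Projective.π M
    have hπsurj : Function.Surjective π := (ModuleCat.epi_iff_surjective π).1 inferInstance
    let K : ModuleCat.{u} R := ModuleCat.of R (LinearMap.ker π.hom)
    let ι : K ⟶ P := ModuleCat.ofHom (LinearMap.ker π.hom).subtype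
    have hinj : Function.Injective ι := Subtype.val_injective
    have w : ι ≫ π = 0 := by
      ext x
      exact x.2
    have hexact : Function.Exact ι π := by
      intro y
      constructor
      · intro hy
        exact ⟨⟨y, hy⟩, rfl⟩
      · rintro ⟨x, rfl⟩
        exact x.2
    refine ⟨K, P, Or.inl (fun i hi _ g _ => extZero_of_projective P g hi),
      ⟨ι, π, hinj, hπsurj, hexact⟩, ih K ?_⟩
    intro g hg i hi
    have h1 : ExtZero (n + 1 + i) M g := h g hg i hi
    have h2 : ExtZero (n + i + 1) M g := by
      have e : n + 1 + i = n + i + 1 := by omega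
      exact e ▸ h1
    exact ext_shift ι π w hinj hπsurj hexact (by omega : 1 ≤ n + i) h2

end

theorem stmt12 {R : Type u} [Ring R] (G : ModuleCat.{u} R → Prop) (n : ℕ)
    (hG : ∀ g, G g → ∀ (M : ModuleCat.{u} R) (i : ℕ), 1 ≤ i → ExtZero (n + i) M g)
    (m : ℕ) (hm : 1 ≤ m) :
    ∀ M : ModuleCat.{u} R,
      FDimLE (fun M : ModuleCat.{u} R =>
        ∀ i, 1 ≤ i → i ≤ m → ∀ g, G g → ExtZero i M g) n M := by
  intro M
  exact stmt12_aux G m n M (fun g hg i hi => hG g hg M i hi)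
end

section
/- Let R be a commutative noetherian ring and M a finitely generated R-module in the G-class G(R). Then for any short exact sequence 0 → K → P → M → 0 with P finitely generated projective, K belongs to G(R). -/
open CategoryTheory

universe u

/-- The Auslander `G`-class `G(R)`. -/
def GClass {R : Type u} [CommRing R] (M : ModuleCat.{u} R) : Prop :=
  Module.Finite R M ∧
  (∀ m : ℕ, 0 < m → ExtZero m M (ModuleCat.of R R)) ∧
  (∀ m : ℕ, 0 < m → ExtZero m (ModuleCat.of R (Module.Dual R M)) (ModuleCat.of R R)) ∧
  Function.Bijective (Module.Dual.eval R M)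

noncomputable section Aux
open CategoryTheory Limits

lemma subsingleton_iff_of_iso {S : Type*} [Ring S] {A B : ModuleCat.{u} S} (e : A ≅ B) :
    Subsingleton A ↔ Subsingleton B := by
  constructor
  · intro h
    refine subsingleton_of_forall_eq 0 fun x => ?_
    have h1 : e.inv x = e.inv 0 := Subsingleton.elim _ _
    calc x = (e.inv ≫ e.hom) x := by rw [e.inv_hom_id]; rfl
      _ = e.hom (e.inv x) := rfl
      _ = e.hom (e.inv 0) := by rw [h1]
      _ = 0 := by simp
  · intro h
    refine subsingleton_of_forall_eq 0 fun x => ?_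
    have h1 : e.hom x = e.hom 0 := Subsingleton.elim _ _
    calc x = (e.hom ≫ e.inv) x := by rw [e.hom_inv_id]; rfl
      _ = e.inv (e.hom x) := rfl
      _ = e.inv (e.hom 0) := by rw [h1]
      _ = 0 := by simp

variable {R : Type u} [Ring R]

lemma exists_factor {M N P : ModuleCat.{u} R} (p : M ⟶ N) (hp : Function.Surjective p)
    (ψ : M ⟶ P) (h : ∀ x, p x = 0 → ψ x = 0) : ∃ φ : N ⟶ P, p ≫ φ = ψ := by
  have hle : LinearMap.ker p.hom ≤ LinearMap.ker ψ.hom := fun x hx => h x hx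
  set e := p.hom.quotKerEquivOfSurjective hp with he
  refine ⟨ModuleCat.ofHom ((Submodule.liftQ (LinearMap.ker p.hom) ψ.hom hle).comp e.symm.toLinearMap), ?_⟩
  ext x
  have hx : e.symm (p x) = Submodule.Quotient.mk x := by
    apply e.injective
    rw [LinearEquiv.apply_symm_apply]
    rfl
  show (Submodule.liftQ (LinearMap.ker p.hom) ψ.hom hle) (e.symm (p x)) = ψ x
  rw [hx]
  rfl

lemma extZero_iff_lift {X N : ModuleCat.{u} R} (P : ProjectiveResolution X) (n : ℕ) :
    ExtZero (n+1) X N ↔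
      ∀ ψ : P.complex.X (n+1) ⟶ N, P.complex.d (n+2) (n+1) ≫ ψ = 0 →
        ∃ χ : P.complex.X n ⟶ N, P.complex.d (n+1) n ≫ χ = ψ := by
  have e := P.isoExt (R := ℤ) (n+1) N
  unfold ExtZero
  rw [subsingleton_iff_of_iso e]
  set D := P.complex.linearYonedaObj ℤ N with hD
  have h1 : Subsingleton ((D.homology (n+1)) : ModuleCat.{u} ℤ) ↔ D.ExactAt (n+1) := by
    rw [HomologicalComplex.exactAt_iff_isZero_homology]
    constructor
    · intro h; exact ModuleCat.isZero_of_subsingleton _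
    · intro h
      refine subsingleton_of_forall_eq 0 fun x => ?_
      have h0 : (𝟙 (D.homology (n+1))) = 0 := h.eq_of_src _ _
      calc x = (𝟙 (D.homology (n+1))) x := rfl
        _ = (0 : D.homology (n+1) ⟶ D.homology (n+1)) x := by rw [h0]
        _ = 0 := rfl
  rw [h1, HomologicalComplex.exactAt_iff' D n (n+1) (n+2)
    (by exact CochainComplex.prev_nat_succ n) (by exact ComplexShape.next_eq' _ rfl)]
  rw [ShortComplex.moduleCat_exact_iff]
  exact Iff.rfl
end Aux


noncomputable section Splice
open CategoryTheory Limits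
variable {R : Type u} [Ring R]
variable {A Q B : ModuleCat.{u} R}

/-- augmentation of a projective resolution, typed with codomain `A`. -/
def resAug {A : ModuleCat.{u} R} (QA : ProjectiveResolution A) : QA.complex.X 0 ⟶ A := QA.π.f 0

lemma resAug_surjective (QA : ProjectiveResolution A) : Function.Surjective (resAug QA) := by
  have h : Epi (QA.π.f 0) := inferInstance
  exact (ModuleCat.epi_iff_surjective (resAug QA)).mp h

lemma resAug_d (QA : ProjectiveResolution A) : QA.complex.d 1 0 ≫ resAug QA = 0 :=
  QA.complex_d_comp_π_f_zero

lemma resAug_exact (QA : ProjectiveResolution A) :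
    ∀ x, resAug QA x = 0 → ∃ y, QA.complex.d 1 0 y = x := by
  have h := QA.exact₀
  rw [ShortComplex.moduleCat_exact_iff] at h
  exact h

def splX (Q : ModuleCat.{u} R) (QA : ProjectiveResolution A) : ℕ → ModuleCat.{u} R
  | 0 => Q
  | (n+1) => QA.complex.X n

def splicedComplex (i : A ⟶ Q) (QA : ProjectiveResolution A) :
    ChainComplex (ModuleCat.{u} R) ℕ :=
  ChainComplex.of (splX Q QA)
    (fun n => match n with
      | 0 => (resAug QA ≫ i : QA.complex.X 0 ⟶ Q)
      | (n+1) => QA.complex.d (n+1) n)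
    (fun n => match n with
      | 0 => by
          show QA.complex.d 1 0 ≫ (resAug QA ≫ i) = 0
          rw [← Category.assoc, resAug_d, zero_comp]
      | (n+1) => by
          show QA.complex.d (n+2) (n+1) ≫ QA.complex.d (n+1) n = 0
          simp)

lemma splicedComplex_X_zero (i : A ⟶ Q) (QA : ProjectiveResolution A) :
    (splicedComplex i QA).X 0 = Q := rfl

lemma splicedComplex_X_succ (i : A ⟶ Q) (QA : ProjectiveResolution A) (n : ℕ) :
    (splicedComplex i QA).X (n+1) = QA.complex.X n := rfl

lemma splicedComplex_d_one_zero (i : A ⟶ Q) (QA : ProjectiveResolution A) :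
    (splicedComplex i QA).d 1 0 = (resAug QA ≫ i : QA.complex.X 0 ⟶ Q) :=
  by unfold splicedComplex; simp [ChainComplex.of.d]; exact Category.id_comp _

lemma splicedComplex_d_succ (i : A ⟶ Q) (QA : ProjectiveResolution A) (n : ℕ) :
    (splicedComplex i QA).d (n+2) (n+1) = QA.complex.d (n+1) n :=
  by unfold splicedComplex; simp [ChainComplex.of.d]; exact Category.id_comp _

def splicedRes (i : A ⟶ Q) (p : Q ⟶ B) [Projective Q] (QA : ProjectiveResolution A)
    (hi : Function.Injective i) (hp : Function.Surjective p) (he : Function.Exact i p) :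
    ProjectiveResolution B where
  complex := splicedComplex i QA
  projective n := by
    cases n with
    | zero => show Projective Q; infer_instance
    | succ n => show Projective (QA.complex.X n); infer_instance
  π := (ChainComplex.toSingle₀Equiv _ _).symm ⟨(p : (splicedComplex i QA).X 0 ⟶ B), by
    rw [splicedComplex_d_one_zero]
    show (resAug QA ≫ i) ≫ p = 0
    rw [Category.assoc]
    have hip : i ≫ p = 0 := by
      ext x
      exact (he (i x)).mpr ⟨x, rfl⟩
    rw [hip, comp_zero]⟩
  quasiIso := ⟨fun n => by
    have hip : i ≫ p = 0 := by
      ext x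
      exact (he (i x)).mpr ⟨x, rfl⟩
    cases n with
    | zero =>
      rw [ChainComplex.quasiIsoAt₀_iff, ShortComplex.quasiIso_iff_of_zeros']
      · constructor
        · rw [ShortComplex.moduleCat_exact_iff]
          intro x hx
          have hx' : p x = 0 := hx
          obtain ⟨a, ha⟩ := (he x).mp hx'
          obtain ⟨y, hy⟩ := resAug_surjective QA a
          refine ⟨y, ?_⟩
          have h3 : ((splicedComplex i QA).d 1 0) y = x := by
            rw [splicedComplex_d_one_zero]
            show i (resAug QA y) = x
            rw [hy, ha]
          exact h3
        · refine (ModuleCat.epi_iff_surjective _).mpr ?_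
          exact hp
      all_goals rfl
    | succ n =>
      rw [quasiIsoAt_iff_exactAt']
      · rw [HomologicalComplex.exactAt_iff' _ (n+2) (n+1) n (by simp) (by simp)]
        rw [ShortComplex.moduleCat_exact_iff]
        cases n with
        | zero =>
          intro x hx
          have hx' : i (resAug QA x) = 0 := by
            have h2 : ((splicedComplex i QA).d 1 0) x = 0 := hx
            rw [splicedComplex_d_one_zero] at h2
            exact h2
          have h0 : resAug QA x = 0 := by
            apply hi
            rw [hx', map_zero]
          obtain ⟨y, hy⟩ := resAug_exact QA x h0
          refine ⟨y, ?_⟩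
          have h3 : ((splicedComplex i QA).d 2 1) y = x := by
            rw [splicedComplex_d_succ]
            exact hy
          exact h3
        | succ n =>
          intro x hx
          have h := QA.exact_succ n
          rw [ShortComplex.moduleCat_exact_iff] at h
          obtain ⟨y, hy⟩ := h x (by
            have h2 : ((splicedComplex i QA).d (n+2) (n+1)) x = 0 := hx
            rw [splicedComplex_d_succ] at h2
            exact h2)
          refine ⟨y, ?_⟩
          have h3 : ((splicedComplex i QA).d (n+3) (n+2)) y = x := by
            rw [splicedComplex_d_succ i QA (n+1)]
            exact hy
          exact h3
      · apply ChainComplex.exactAt_succ_single_obj⟩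
end Splice

noncomputable section DimShift
open CategoryTheory Limits
variable {R : Type u} [Ring R]
variable {A Q B : ModuleCat.{u} R}

lemma splicedRes_complex (i : A ⟶ Q) (p : Q ⟶ B) [Projective Q] (QA : ProjectiveResolution A)
    (hi : Function.Injective i) (hp : Function.Surjective p) (he : Function.Exact i p) :
    (splicedRes i p QA hi hp he).complex = splicedComplex i QA := rfl

lemma extZero_dim_shift (i : A ⟶ Q) (p : Q ⟶ B) [Projective Q] (QA : ProjectiveResolution A)
    (hi : Function.Injective i) (hp : Function.Surjective p) (he : Function.Exact i p)
    (N : ModuleCat.{u} R) (n : ℕ) :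
    ExtZero (n+2) B N ↔ ExtZero (n+1) A N := by
  rw [extZero_iff_lift (splicedRes i p QA hi hp he) (n+1), extZero_iff_lift QA n]
  constructor
  · intro h ψ hψ
    obtain ⟨χ, hχ⟩ := h ψ (by
      show (splicedComplex i QA).d (n+3) (n+2) ≫ ψ = 0
      rw [splicedComplex_d_succ i QA (n+1)]
      exact hψ)
    have hχ' : (splicedComplex i QA).d (n+2) (n+1) ≫ χ = ψ := hχ
    rw [splicedComplex_d_succ i QA n] at hχ'
    exact ⟨χ, hχ'⟩
  · intro h ψ hψ
    have hψ' : (splicedComplex i QA).d (n+3) (n+2) ≫ ψ = 0 := hψ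
    rw [splicedComplex_d_succ i QA (n+1)] at hψ'
    obtain ⟨χ, hχ⟩ := h ψ hψ'
    refine ⟨χ, ?_⟩
    show (splicedComplex i QA).d (n+2) (n+1) ≫ χ = ψ
    rw [splicedComplex_d_succ i QA n]
    exact hχ

lemma extZero_one_iff (i : A ⟶ Q) (p : Q ⟶ B) [Projective Q] (QA : ProjectiveResolution A)
    (hi : Function.Injective i) (hp : Function.Surjective p) (he : Function.Exact i p)
    (N : ModuleCat.{u} R) :
    ExtZero 1 B N ↔ ∀ φ : A ⟶ N, ∃ χ : Q ⟶ N, i ≫ χ = φ := by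
  rw [extZero_iff_lift (splicedRes i p QA hi hp he) 0]
  constructor
  · intro h φ
    obtain ⟨χ, hχ⟩ := h (resAug QA ≫ φ) (by
      show (splicedComplex i QA).d 2 1 ≫ (resAug QA ≫ φ) = 0
      rw [splicedComplex_d_succ i QA 0]
      show QA.complex.d 1 0 ≫ (resAug QA ≫ φ) = 0
      rw [← Category.assoc, resAug_d, zero_comp])
    have hχ' : (splicedComplex i QA).d 1 0 ≫ χ = resAug QA ≫ φ := hχ
    rw [splicedComplex_d_one_zero] at hχ'
    have hχ2 : resAug QA ≫ (i ≫ χ) = resAug QA ≫ φ := (Category.assoc _ _ _).symm.trans hχ'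
    refine ⟨χ, ?_⟩
    have hepi : Epi (resAug QA) := (ModuleCat.epi_iff_surjective _).mpr (resAug_surjective QA)
    exact (cancel_epi (resAug QA)).mp hχ2
  · intro h ψ hψ
    have hψ' : (splicedComplex i QA).d 2 1 ≫ ψ = 0 := hψ
    rw [splicedComplex_d_succ i QA 0] at hψ'
    obtain ⟨φ, hφ⟩ := exists_factor (resAug QA) (resAug_surjective QA) ψ (fun x hx => by
      obtain ⟨y, hy⟩ := resAug_exact QA x hx
      rw [← hy]
      have h2 : (QA.complex.d 1 0 ≫ ψ) y = 0 := by
        have h3 : QA.complex.d 1 0 ≫ ψ = 0 := hψ'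
        rw [h3]; rfl
      exact h2)
    obtain ⟨χ, hχ⟩ := h φ
    refine ⟨χ, ?_⟩
    show (splicedComplex i QA).d 1 0 ≫ χ = ψ
    rw [splicedComplex_d_one_zero]
    show (resAug QA ≫ i) ≫ χ = ψ
    rw [Category.assoc, hχ, hφ]
end DimShift

theorem stmt17 {R : Type u} [CommRing R] [IsNoetherianRing R]
    (M K P : ModuleCat.{u} R) (hM : GClass M)
    (f : K ⟶ P) (g : P ⟶ M)
    (hPproj : Module.Projective R P) (hPfin : Module.Finite R P)
    (hinj : Function.Injective f) (hsurj : Function.Surjective g)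
    (hex : Function.Exact f g) :
    GClass K := by
  obtain ⟨hMfin, hExtM, hExtMdual, hMeval⟩ := hM
  haveI := hPproj
  haveI := hPfin
  haveI hPcat : CategoryTheory.Projective P :=
    (IsProjective.iff_projective (R := R) (P := ↑P)).mp hPproj
  let QK : CategoryTheory.ProjectiveResolution K := CategoryTheory.ProjectiveResolution.of K
  -- finiteness of K
  haveI : IsNoetherian R ↑P := isNoetherian_of_isNoetherianRing_of_finite R ↑P
  haveI hKnoeth : IsNoetherian R ↑K := isNoetherian_of_injective f.hom hinj
  haveI hKfin : Module.Finite R ↑K := inferInstance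
  have hgf : ∀ k, g (f k) = 0 := fun k => (hex (f k)).mpr ⟨k, rfl⟩
  -- Ext vanishing for K
  have hExtK : ∀ m : ℕ, 0 < m → ExtZero m K (ModuleCat.of R R) := by
    intro m hm
    obtain ⟨n, rfl⟩ : ∃ n, m = n + 1 := ⟨m - 1, (Nat.succ_pred_eq_of_pos hm).symm⟩
    exact (extZero_dim_shift f g QK hinj hsurj hex _ n).mp (hExtM (n+2) (by omega))
  -- lifting property : every functional on K extends to P
  have hlift : ∀ φ : K ⟶ (ModuleCat.of R R), ∃ χ : P ⟶ (ModuleCat.of R R), f ≫ χ = φ :=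
    (extZero_one_iff f g QK hinj hsurj hex _).mp (hExtM 1 one_pos)
  -- the dualized exact sequence 0 → M* → P* → K* → 0
  have hi' : Function.Injective
      (ModuleCat.ofHom g.hom.dualMap : (ModuleCat.of R (Module.Dual R ↑M)) ⟶ (ModuleCat.of R (Module.Dual R ↑P))) := by
    intro μ ν hμν
    apply LinearMap.ext; intro m
    obtain ⟨x, rfl⟩ := hsurj m
    exact LinearMap.congr_fun hμν x
  have hp'surj : Function.Surjective
      (ModuleCat.ofHom f.hom.dualMap : (ModuleCat.of R (Module.Dual R ↑P)) ⟶ (ModuleCat.of R (Module.Dual R ↑K))) := by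
    intro lam
    obtain ⟨χ, hχ⟩ := hlift (ModuleCat.ofHom lam)
    exact ⟨χ.hom, congrArg ModuleCat.Hom.hom hχ⟩
  have he' : Function.Exact
      (ModuleCat.ofHom g.hom.dualMap : (ModuleCat.of R (Module.Dual R ↑M)) ⟶ (ModuleCat.of R (Module.Dual R ↑P)))
      (ModuleCat.ofHom f.hom.dualMap : (ModuleCat.of R (Module.Dual R ↑P)) ⟶ (ModuleCat.of R (Module.Dual R ↑K))) := by
    intro μ
    constructor
    · intro hμ
      obtain ⟨ν, hν⟩ := exists_factor (P := ModuleCat.of R R) g hsurj (ModuleCat.ofHom μ) (fun x hx => by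
        obtain ⟨k, rfl⟩ := (hex x).mp hx
        show μ (f k) = 0
        exact LinearMap.congr_fun hμ k)
      exact ⟨ν.hom, congrArg ModuleCat.Hom.hom hν⟩
    · rintro ⟨ν, rfl⟩
      apply LinearMap.ext; intro k
      show ν (g (f k)) = 0
      rw [hgf k, map_zero]
  haveI : Module.Projective R (Module.Dual R ↑P) := inferInstance
  haveI hPdproj : CategoryTheory.Projective (ModuleCat.of R (Module.Dual R ↑P)) :=
    (IsProjective.iff_projective (R := R) (P := Module.Dual R ↑P)).mp inferInstance
  let QMd : CategoryTheory.ProjectiveResolution (ModuleCat.of R (Module.Dual R ↑M)) :=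
    CategoryTheory.ProjectiveResolution.of _
  haveI : Module.IsReflexive R ↑P := inferInstance
  have hPeval : Function.Bijective (Module.Dual.eval R ↑P) := Module.bijective_dual_eval R ↑P
  -- lifting along the dual sequence : every functional on M* extends to P*
  have hliftd : ∀ φ : (ModuleCat.of R (Module.Dual R ↑M)) ⟶ (ModuleCat.of R R),
      ∃ χ : (ModuleCat.of R (Module.Dual R ↑P)) ⟶ (ModuleCat.of R R),
        (ModuleCat.ofHom g.hom.dualMap : (ModuleCat.of R (Module.Dual R ↑M)) ⟶ (ModuleCat.of R (Module.Dual R ↑P))) ≫ χ = φ := by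
    intro φ
    obtain ⟨m, hm⟩ := hMeval.2 φ.hom
    obtain ⟨x, rfl⟩ := hsurj m
    refine ⟨ModuleCat.ofHom (Module.Dual.eval R ↑P x), ?_⟩
    ext μ
    show (Module.Dual.eval R ↑P x) (g.hom.dualMap μ) = φ.hom μ
    rw [← hm]
    rfl
  -- Ext vanishing for the dual of K
  have hExtKd : ∀ m : ℕ, 0 < m →
      ExtZero m (ModuleCat.of R (Module.Dual R ↑K)) (ModuleCat.of R R) := by
    intro m hm
    match m, hm with
    | 1, _ =>
      exact (extZero_one_iff (A := ModuleCat.of R (Module.Dual R ↑M)) (Q := ModuleCat.of R (Module.Dual R ↑P))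
        (B := ModuleCat.of R (Module.Dual R ↑K)) (ModuleCat.ofHom g.hom.dualMap) (ModuleCat.ofHom f.hom.dualMap)
        QMd hi' hp'surj he' _).mpr hliftd
    | (n+2), _ =>
      exact (extZero_dim_shift (A := ModuleCat.of R (Module.Dual R ↑M)) (Q := ModuleCat.of R (Module.Dual R ↑P))
        (B := ModuleCat.of R (Module.Dual R ↑K)) (ModuleCat.ofHom g.hom.dualMap) (ModuleCat.ofHom f.hom.dualMap)
        QMd hi' hp'surj he' _ n).mpr (hExtMdual (n+1) (by omega))
  -- reflexivity of K
  have hKeval : Function.Bijective (Module.Dual.eval R ↑K) := by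
    constructor
    · rw [injective_iff_map_eq_zero]
      intro k hk
      have h1 : ∀ μ : Module.Dual R ↑P, μ (f k) = 0 := by
        intro μ
        have h2 : Module.Dual.eval R ↑K k (f.hom.dualMap μ) = 0 := by rw [hk]; rfl
        exact h2
      have h3 : f k = 0 := by
        apply hPeval.1
        apply LinearMap.ext; intro μ
        show μ (f k) = (Module.Dual.eval R ↑P 0) μ
        rw [h1 μ]
        simp
      have h4 : f k = f 0 := by simpa using h3
      exact hinj h4
    · intro x
      obtain ⟨q, hq⟩ := hPeval.2 (x ∘ₗ (f.hom.dualMap : Module.Dual R ↑P →ₗ[R] Module.Dual R ↑K))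
      have hgq : g q = 0 := by
        apply hMeval.1
        apply LinearMap.ext; intro ν
        show ν (g q) = (Module.Dual.eval R ↑M 0) ν
        have h5 : ν (g q) = Module.Dual.eval R ↑P q (g.hom.dualMap ν) := rfl
        have h7 : Module.Dual.eval R ↑P q (g.hom.dualMap ν)
            = x (f.hom.dualMap (g.hom.dualMap ν)) := by rw [hq]; rfl
        have h8 : f.hom.dualMap (g.hom.dualMap ν) = 0 := by
          apply LinearMap.ext; intro k
          show ν (g (f k)) = 0
          rw [hgf k, map_zero]
        rw [h5, h7, h8]
        simp
      obtain ⟨k, hk⟩ := (hex q).mp hgq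
      refine ⟨k, ?_⟩
      apply LinearMap.ext; intro lam
      obtain ⟨μ, hμ⟩ := hp'surj lam
      show lam k = x lam
      rw [← hμ]
      show (f.hom.dualMap μ) k = x (f.hom.dualMap μ)
      have h9 : (f.hom.dualMap μ) k = μ (f k) := rfl
      rw [h9, hk]
      have h10 : μ q = Module.Dual.eval R ↑P q μ := rfl
      rw [h10, hq]
      rfl
  exact ⟨hKfin, hExtK, hExtKd, hKeval⟩
end
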